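/- arXiv:1004.4127 — 5 statements merged into one kernel-verified Lean document; each statement's English description precedes it below -/
import Mathlib

section
/- A connected graph Γ admits a partition of its edge set into copies of the path P₃ (the path with 3 vertices and 2 edges) if and only if the number of edges of Γ is even. -/
open SimpleGraph

/-- The complete graph on the set `s` of natural numbers, viewed as a graph on `ℕ`. -/
def Kon (s : Set ℕ) : SimpleGraph ℕ where
  Adj x y := x ≠ y ∧ x ∈ s ∧ y ∈ s
  symm := ⟨fun x y ⟨h, hx, hy⟩ => ⟨h.symm, hy, hx⟩⟩
  loopless := ⟨fun x h => h.1 rfl⟩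

/-- `B` is a copy of `Γ`: there is an injection of vertices under which the
edges of `B` are exactly the images of the edges of `Γ`. -/
def IsCopy {α β : Type*} (Γ : SimpleGraph α) (B : SimpleGraph β) : Prop :=
  ∃ φ : α ↪ β, ∀ x y : β, B.Adj x y ↔ ∃ a b, Γ.Adj a b ∧ φ a = x ∧ φ b = y

/-- A `(G, Γ)`-design: a set of copies of `Γ`, each a subgraph of `G` with
nonempty edge set, whose edge sets partition the edge set of `G`. -/
def IsDesign {α β : Type*} (G : SimpleGraph β) (Γ : SimpleGraph α)
    (D : Set (SimpleGraph β)) : Prop :=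
  (∀ B ∈ D, B ≤ G ∧ IsCopy Γ B ∧ B.edgeSet.Nonempty) ∧
  ∀ e ∈ G.edgeSet, ∃! B, B ∈ D ∧ e ∈ B.edgeSet

/-- A down-link from the design `D` to the design `D'`: each block is mapped
to a subgraph of itself. -/
def IsDownlink {β : Type*} (D D' : Set (SimpleGraph β))
    (f : SimpleGraph β → SimpleGraph β) : Prop :=
  ∀ B ∈ D, f B ∈ D' ∧ f B ≤ B


set_option linter.unusedSectionVars false

namespace Stmt0Aux

open Finset

section Generic


variable {α : Type*}

/-- Any finset of even cardinality can be partitioned into pairs of distinct elements. -/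
lemma pairup [DecidableEq α] :
    ∀ (n : ℕ) (s : Finset α), s.card = n → Even n →
    ∃ P : Finset (α × α),
      (∀ p ∈ P, p.1 ∈ s ∧ p.2 ∈ s ∧ p.1 ≠ p.2) ∧
      (∀ e ∈ s, ∃! p, p ∈ P ∧ (e = p.1 ∨ e = p.2)) := by
  intro n
  induction n using Nat.strong_induction_on with
  | _ n ih =>
    intro s hs hn
    rcases n with _ | n
    · refine ⟨∅, by simp, ?_⟩
      have : s = ∅ := Finset.card_eq_zero.mp hs
      simp [this]
    · have h2 : 2 ≤ s.card := by
        rcases hn with ⟨k, hk⟩; omega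
      obtain ⟨a, ha⟩ := Finset.card_pos.mp (by omega : 0 < s.card)
      obtain ⟨b, hb⟩ := Finset.card_pos.mp (show 0 < (s.erase a).card by
        rw [Finset.card_erase_of_mem ha]; omega)
      have hba : b ≠ a := Finset.ne_of_mem_erase hb
      have hbs : b ∈ s := Finset.mem_of_mem_erase hb
      set s' := (s.erase a).erase b with hs'
      have hsub : s' ⊆ s := fun x hx =>
        Finset.mem_of_mem_erase (Finset.mem_of_mem_erase hx)
      have hna : a ∉ s' := fun h => by
        have := Finset.mem_of_mem_erase h
        exact (Finset.ne_of_mem_erase this) rfl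
      have hnb : b ∉ s' := fun h => Finset.notMem_erase _ _ h
      have hcard : s'.card = n - 1 := by
        rw [hs', Finset.card_erase_of_mem hb, Finset.card_erase_of_mem ha, hs]
        omega
      have hlt : n - 1 < n + 1 := by omega
      have hev : Even (n - 1) := by
        rcases hn with ⟨k, hk⟩
        exact ⟨k - 1, by omega⟩
      obtain ⟨P', hP1', hP2'⟩ := ih (n - 1) hlt s' hcard hev
      refine ⟨insert (a, b) P', ?_, ?_⟩
      · intro p hp
        rcases Finset.mem_insert.mp hp with h | h
        · subst h; exact ⟨ha, hbs, fun h => hba h.symm⟩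
        · obtain ⟨h1, h2, h3⟩ := hP1' p h
          exact ⟨hsub h1, hsub h2, h3⟩
      · intro e he
        by_cases hes : e ∈ s'
        · obtain ⟨p, ⟨hpP, hpe⟩, hpu⟩ := hP2' e hes
          refine ⟨p, ⟨Finset.mem_insert_of_mem hpP, hpe⟩, ?_⟩
          intro q ⟨hqP, hqe⟩
          rcases Finset.mem_insert.mp hqP with h | h
          · exfalso; subst h
            rcases hqe with h | h <;> simp only at h <;> subst h
            · exact hna hes
            · exact hnb hes
          · exact hpu q ⟨h, hqe⟩
        · have heab : e = a ∨ e = b := by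
            by_contra hc
            push_neg at hc
            exact hes (by
              rw [hs']
              exact Finset.mem_erase.mpr ⟨hc.2, Finset.mem_erase.mpr ⟨hc.1, he⟩⟩)
          refine ⟨(a, b), ⟨Finset.mem_insert_self _ _, by
            rcases heab with h | h <;> simp [h]⟩, ?_⟩
          intro q ⟨hqP, hqe⟩
          rcases Finset.mem_insert.mp hqP with h | h
          · exact h
          · exfalso
            obtain ⟨h1, h2, _⟩ := hP1' q h
            have hmem : e ∈ s' := by
              rcases hqe with he' | he'
              · rw [he']; exact h1
              · rw [he']; exact h2
            rcases heab with h | h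
            · exact hna (h ▸ hmem)
            · exact hnb (h ▸ hmem)

/-- A finset with a fixed-point-free involution has even cardinality. -/
lemma even_card_invol [DecidableEq α] :
    ∀ (n : ℕ) (s : Finset α), s.card = n → ∀ (i : α → α),
      (∀ a ∈ s, i a ∈ s ∧ i (i a) = a ∧ i a ≠ a) → Even s.card := by
  intro n
  induction n using Nat.strong_induction_on with
  | _ n ih =>
    intro s hs i hi
    rcases Finset.eq_empty_or_nonempty s with h | ⟨a, ha⟩
    · simp [h]
    · obtain ⟨hia, hiia, hne⟩ := hi a ha
      set s' := (s.erase a).erase (i a) with hs'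
      have hsub : s' ⊆ s := fun x hx =>
        Finset.mem_of_mem_erase (Finset.mem_of_mem_erase hx)
      have hcard : s'.card = n - 2 := by
        rw [hs', Finset.card_erase_of_mem (Finset.mem_erase.mpr ⟨hne, hia⟩),
          Finset.card_erase_of_mem ha, hs]
        omega
      have hn2 : 2 ≤ n := by
        have : 2 ≤ s.card := Finset.one_lt_card.mpr ⟨a, ha, i a, hia, fun h => hne h.symm⟩
        omega
      have hev : Even s'.card := by
        refine ih (n - 2) (by omega) s' hcard i ?_
        intro b hb
        have hbs : b ∈ s := hsub hb
        have hbia : b ≠ i a := Finset.ne_of_mem_erase hb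
        have hba : b ≠ a := Finset.ne_of_mem_erase (Finset.mem_of_mem_erase hb)
        obtain ⟨h1, h2, h3⟩ := hi b hbs
        refine ⟨?_, h2, h3⟩
        rw [hs']
        refine Finset.mem_erase.mpr ⟨?_, Finset.mem_erase.mpr ⟨?_, h1⟩⟩
        · intro h
          apply hba
          rw [← h2, h, hiia]
        · intro h
          apply hbia
          rw [← h2, h]
      rw [hcard] at hev
      rw [hs]
      rcases hev with ⟨k, hk⟩
      exact ⟨k + 1, by omega⟩


end Generic

section PathInc


variable {V : Type*} [DecidableEq V] {Γ : SimpleGraph V}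

/-- Along a path from `x` to `y`, the number of edges containing `v` is odd
iff `v` is an endpoint (mod-2 statement valid also for `x = y`). -/
lemma path_incidence {x y : V} (p : Γ.Walk x y) (hp : p.IsPath) (v : V) :
    (p.edges.filter (fun e => v ∈ e)).length % 2
      = ((if v = x then 1 else 0) + (if v = y then 1 else 0)) % 2 := by
  induction p with
  | nil =>
    simp only [Walk.edges_nil, List.filter_nil, List.length_nil]
    split <;> simp
  | @cons x z y h q ih =>
    rw [SimpleGraph.Walk.cons_isPath_iff] at hp
    have hq := ih hp.1
    have hxz : x ≠ z := h.ne
    have hxy : x ≠ y := by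
      intro he
      exact hp.2 (he ▸ q.end_mem_support)
    rw [SimpleGraph.Walk.edges_cons]
    have hlen : ((s(x,z) :: q.edges).filter (fun e => v ∈ e)).length
        = (if v = x ∨ v = z then 1 else 0)
          + (q.edges.filter (fun e => v ∈ e)).length := by
      rw [List.filter_cons]
      by_cases hm : v ∈ s(x, z)
      · have h2 : v = x ∨ v = z := by rwa [Sym2.mem_iff] at hm
        simp [hm, h2]
        omega
      · have h2 : ¬(v = x ∨ v = z) := by rwa [Sym2.mem_iff] at hm
        simp [hm, h2]
    rw [hlen]
    split_ifs at hq ⊢ <;> first | omega | simp_all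


end PathInc

section Assign


/-- The "other" element of a `Sym2`. -/
noncomputable def oth {α : Type*} (e : Sym2 α) (v : α) : α :=
  letI := Classical.dec (∃ w, w ∈ e ∧ w ≠ v)
  if h : ∃ w, w ∈ e ∧ w ≠ v then h.choose else v

lemma oth_spec {α : Type*} {e : Sym2 α} (he : ¬ e.IsDiag) (v : α) :
    oth e v ∈ e ∧ oth e v ≠ v := by
  have hex : ∃ w, w ∈ e ∧ w ≠ v := by
    induction e using Sym2.ind with
    | _ a b =>
      rw [Sym2.mk_isDiag_iff] at he
      by_cases hva : v = a
      · exact ⟨b, Sym2.mem_mk_right a b, fun hb => he ((hb.trans hva).symm)⟩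
      · exact ⟨a, Sym2.mem_mk_left a b, fun ha => hva ha.symm⟩
  unfold oth
  rw [dif_pos hex]
  exact hex.choose_spec

lemma mem_two {α : Type*} {e : Sym2 α} {p q v : α} (hpq : p ≠ q)
    (hp : p ∈ e) (hq : q ∈ e) (hv : v ∈ e) : v = p ∨ v = q := by
  induction e using Sym2.ind with
  | _ a b =>
    rw [Sym2.mem_iff] at hp hq hv
    rcases hp with rfl | rfl <;> rcases hq with rfl | rfl <;> tauto

variable {V : Type*} [Fintype V] [DecidableEq V] (Γ : SimpleGraph V) [DecidableRel Γ.Adj]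

/-- Number of edges assigned to `v` by the assignment `f`. -/
def Acnt (f : Sym2 V → V) (v : V) : ℕ := (Γ.edgeFinset.filter (fun e => f e = v)).card

lemma flip_parity (f : Sym2 V → V) (hf : ∀ e ∈ Γ.edgeSet, f e ∈ e) {x y : V}
    (p : Γ.Walk x y) (hp : p.IsPath) :
    ∃ g : Sym2 V → V, (∀ e ∈ Γ.edgeSet, g e ∈ e) ∧ ∀ v,
      Acnt Γ g v % 2
        = (Acnt Γ f v + ((if v = x then 1 else 0) + (if v = y then 1 else 0))) % 2 := by
  set pE : Finset (Sym2 V) := p.edges.toFinset with hpE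
  set g : Sym2 V → V := fun e => if e ∈ pE then oth e (f e) else f e with hg
  have hpE_sub : pE ⊆ Γ.edgeFinset := by
    intro e he
    rw [hpE, List.mem_toFinset] at he
    rw [mem_edgeFinset]
    exact p.edges_subset_edgeSet he
  have hgmem : ∀ e ∈ Γ.edgeSet, g e ∈ e ∧ (e ∈ pE → g e ≠ f e) := by
    intro e he
    rw [hg]
    dsimp only
    split
    · exact ⟨(oth_spec (Γ.not_isDiag_of_mem_edgeSet he) _).1,
        fun _ => (oth_spec (Γ.not_isDiag_of_mem_edgeSet he) _).2⟩
    · next hne => exact ⟨hf e he, fun hmem => absurd hmem hne⟩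
  refine ⟨g, fun e he => (hgmem e he).1, ?_⟩
  intro v
  have hsplit : ∀ (h : Sym2 V → V), (Γ.edgeFinset.filter (fun e => h e = v)).card
      = (pE.filter (fun e => h e = v)).card
        + ((Γ.edgeFinset \ pE).filter (fun e => h e = v)).card := by
    intro h
    rw [← Finset.card_union_of_disjoint
      (Finset.disjoint_filter_filter Finset.disjoint_sdiff),
      ← Finset.filter_union, Finset.union_sdiff_of_subset hpE_sub]
  have hoff : ((Γ.edgeFinset \ pE).filter (fun e => g e = v))
      = ((Γ.edgeFinset \ pE).filter (fun e => f e = v)) := by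
    apply Finset.filter_congr
    intro e he
    rw [Finset.mem_sdiff] at he
    rw [hg]
    simp [he.2]
  have hdisj : Disjoint (pE.filter (fun e => g e = v)) (pE.filter (fun e => f e = v)) := by
    rw [Finset.disjoint_left]
    intro e he1 he2
    rw [Finset.mem_filter] at he1 he2
    have heS : e ∈ Γ.edgeSet := by
      have := hpE_sub he1.1
      rwa [mem_edgeFinset] at this
    exact (hgmem e heS).2 he1.1 (he1.2.trans he2.2.symm)
  have hon : (pE.filter (fun e => g e = v)).card + (pE.filter (fun e => f e = v)).card
      = (pE.filter (fun e => v ∈ e)).card := by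
    rw [← Finset.card_union_of_disjoint hdisj, ← Finset.filter_or]
    congr 1
    apply Finset.filter_congr
    intro e he
    have heS : e ∈ Γ.edgeSet := by
      have := hpE_sub he
      rwa [mem_edgeFinset] at this
    constructor
    · rintro (h | h)
      · rw [← h]; exact (hgmem e heS).1
      · rw [← h]; exact hf e heS
    · intro hv
      rcases mem_two ((hgmem e heS).2 he) (hgmem e heS).1 (hf e heS) hv with h | h
      · exact Or.inl h.symm
      · exact Or.inr h.symm
  have hI : (pE.filter (fun e => v ∈ e)).card % 2
      = ((if v = x then 1 else 0) + (if v = y then 1 else 0)) % 2 := by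
    have hnd : p.edges.Nodup := hp.isTrail.edges_nodup
    have h1 : pE.filter (fun e => v ∈ e) = (p.edges.filter (fun e => v ∈ e)).toFinset := by
      rw [hpE, List.toFinset_filter]
      simp
    rw [h1, List.toFinset_card_of_nodup (hnd.filter _)]
    exact path_incidence p hp v
  have e1 := hsplit g
  have e2 := hsplit f
  have e3 := congrArg Finset.card hoff
  rw [Acnt, Acnt]
  omega

/-- The set of vertices with an odd number of assigned edges. -/
def odds (f : Sym2 V → V) : Finset V := univ.filter (fun v => ¬ Even (Acnt Γ f v))

lemma odds_card_even (f : Sym2 V → V) (hE : Even Γ.edgeFinset.card) :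
    Even (odds Γ f).card := by
  have hsum : ∑ v ∈ univ, Acnt Γ f v = Γ.edgeFinset.card :=
    (Finset.card_eq_sum_card_fiberwise (fun e _ => Finset.mem_univ (f e))).symm
  have h2 := (Finset.even_sum_iff_even_card_odd (fun v => Acnt Γ f v)).mp (by rwa [hsum])
  rw [odds]
  have heq : (univ.filter (fun v => ¬ Even (Acnt Γ f v)))
      = (univ.filter (fun v => Odd (Acnt Γ f v))) := by
    apply Finset.filter_congr
    intro v _
    simp [Nat.not_even_iff_odd]
  rw [heq]
  exact h2

lemma exists_even_assignment (hconn : Γ.Connected) (hE : Even Γ.edgeFinset.card) :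
    ∃ f : Sym2 V → V, (∀ e ∈ Γ.edgeSet, f e ∈ e) ∧ ∀ v, Even (Acnt Γ f v) := by
  have f0ex : ∀ e : Sym2 V, ∃ w, w ∈ e := by
    intro e
    induction e using Sym2.ind with
    | _ a b => exact ⟨a, Sym2.mem_mk_left a b⟩
  suffices H : ∀ (n : ℕ) (f : Sym2 V → V), (∀ e ∈ Γ.edgeSet, f e ∈ e) →
      (odds Γ f).card = n → ∃ g, (∀ e ∈ Γ.edgeSet, g e ∈ e) ∧ ∀ v, Even (Acnt Γ g v) by
    exact H _ (fun e => (f0ex e).choose) (fun e _ => (f0ex e).choose_spec) rfl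
  intro n
  induction n using Nat.strong_induction_on with
  | _ n ih =>
    intro f hf hcard
    rcases Finset.eq_empty_or_nonempty (odds Γ f) with h0 | hne
    · refine ⟨f, hf, fun v => ?_⟩
      by_contra hv
      have hmem : v ∈ odds Γ f := by
        rw [odds, Finset.mem_filter]
        exact ⟨Finset.mem_univ v, hv⟩
      rw [h0] at hmem
      exact absurd hmem (Finset.notMem_empty v)
    · have hev : Even (odds Γ f).card := odds_card_even Γ f hE
      obtain ⟨x, hx⟩ := hne
      have h2 : 1 < (odds Γ f).card := by
        rcases hev with ⟨k, hk⟩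
        have := Finset.card_pos.mpr ⟨x, hx⟩
        omega
      obtain ⟨y, hy, hyx⟩ := Finset.exists_mem_ne h2 x
      have hw : Γ.Walk x y := ((hconn.preconnected x y).some)
      obtain ⟨g, hg, hpar⟩ := flip_parity Γ f hf hw.bypass (Walk.bypass_isPath hw)
      have hxodd : ¬ Even (Acnt Γ f x) := by
        rw [odds, Finset.mem_filter] at hx; exact hx.2
      have hyodd : ¬ Even (Acnt Γ f y) := by
        rw [odds, Finset.mem_filter] at hy; exact hy.2
      have hodds : odds Γ g = ((odds Γ f).erase x).erase y := by
        ext v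
        rw [odds, odds, Finset.mem_erase, Finset.mem_erase, Finset.mem_filter,
          Finset.mem_filter]
        simp only [Finset.mem_univ, true_and]
        have hp := hpar v
        rw [Nat.even_iff, Nat.even_iff]
        by_cases hvx : v = x
        · subst hvx
          rw [if_pos rfl, if_neg (fun h => hyx h.symm)] at hp
          rw [Nat.even_iff] at hxodd
          constructor
          · intro hg0
            exfalso
            omega
          · rintro ⟨hvy, hvx, _⟩
            exact absurd rfl hvx
        · by_cases hvy : v = y
          · subst hvy
            rw [if_neg hvx, if_pos rfl] at hp
            rw [Nat.even_iff] at hyodd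
            constructor
            · intro hg0
              exfalso
              omega
            · rintro ⟨hvy, _, _⟩
              exact absurd rfl hvy
          · rw [if_neg hvx, if_neg hvy] at hp
            constructor
            · intro hg0
              exact ⟨hvy, hvx, by omega⟩
            · rintro ⟨_, _, hf0⟩
              omega
      have hxc : x ∈ odds Γ f := hx
      have hyc : y ∈ (odds Γ f).erase x := Finset.mem_erase.mpr ⟨hyx, hy⟩
      have hcard' : (odds Γ g).card = n - 2 := by
        rw [hodds, Finset.card_erase_of_mem hyc, Finset.card_erase_of_mem hxc, hcard]
        omega
      have hn0 : 0 < n := by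
        rw [← hcard]
        exact Finset.card_pos.mpr ⟨x, hx⟩
      exact ih (n - 2) (by omega) g hg hcard'


end Assign

section Blocks


open Finset

variable {V : Type*} [Fintype V] [DecidableEq V] (Γ : SimpleGraph V) [DecidableRel Γ.Adj]

lemma block_props {e1 e2 : Sym2 V} (h1 : e1 ∈ Γ.edgeSet) (h2 : e2 ∈ Γ.edgeSet)
    (hne : e1 ≠ e2) {v : V} (hv1 : v ∈ e1) (hv2 : v ∈ e2) :
    fromEdgeSet {e1, e2} ≤ Γ ∧ IsCopy (pathGraph 3) (fromEdgeSet {e1, e2}) ∧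
      (fromEdgeSet {e1, e2} : SimpleGraph V).edgeSet = {e1, e2} := by
  obtain ⟨a, ha⟩ := Sym2.mem_iff_exists.mp hv1
  obtain ⟨c, hc⟩ := Sym2.mem_iff_exists.mp hv2
  have hva : v ≠ a := by
    intro h
    exact Γ.not_isDiag_of_mem_edgeSet h1 (by rw [ha, Sym2.mk_isDiag_iff]; exact h)
  have hvc : v ≠ c := by
    intro h
    exact Γ.not_isDiag_of_mem_edgeSet h2 (by rw [hc, Sym2.mk_isDiag_iff]; exact h)
  have hac : a ≠ c := by
    intro h
    exact hne (by rw [ha, hc, h])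
  have hav : a ≠ v := hva.symm
  have hcv : c ≠ v := hvc.symm
  have hca : c ≠ a := hac.symm
  refine ⟨?_, ?_, ?_⟩
  · intro x y hxy
    rw [fromEdgeSet_adj] at hxy
    obtain ⟨hm, hxy'⟩ := hxy
    simp only [Set.mem_insert_iff, Set.mem_singleton_iff] at hm
    rcases hm with hm | hm
    · rw [← mem_edgeSet, hm]
      exact h1
    · rw [← mem_edgeSet, hm]
      exact h2
  · refine ⟨⟨![a, v, c], ?_⟩, ?_⟩
    · intro i j hij
      fin_cases i <;> fin_cases j <;> simp_all
    · intro x y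
      rw [fromEdgeSet_adj]
      constructor
      · rintro ⟨hm, hxy⟩
        simp only [Set.mem_insert_iff, Set.mem_singleton_iff] at hm
        rcases hm with hm | hm
        · rw [ha, Sym2.eq_iff] at hm
          rcases hm with ⟨rfl, rfl⟩ | ⟨rfl, rfl⟩
          · exact ⟨1, 0, by rw [pathGraph_adj]; right; rfl, rfl, rfl⟩
          · exact ⟨0, 1, by rw [pathGraph_adj]; left; rfl, rfl, rfl⟩
        · rw [hc, Sym2.eq_iff] at hm
          rcases hm with ⟨rfl, rfl⟩ | ⟨rfl, rfl⟩
          · exact ⟨1, 2, by rw [pathGraph_adj]; left; rfl, rfl, rfl⟩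
          · exact ⟨2, 1, by rw [pathGraph_adj]; right; rfl, rfl, rfl⟩
      · rintro ⟨i, j, hadj, rfl, rfl⟩
        rw [pathGraph_adj] at hadj
        have m1 : s(v, a) ∈ ({e1, e2} : Set (Sym2 V)) := Or.inl ha.symm
        have m1' : s(a, v) ∈ ({e1, e2} : Set (Sym2 V)) := by rw [Sym2.eq_swap]; exact m1
        have m2 : s(v, c) ∈ ({e1, e2} : Set (Sym2 V)) := Or.inr hc.symm
        have m2' : s(c, v) ∈ ({e1, e2} : Set (Sym2 V)) := by rw [Sym2.eq_swap]; exact m2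
        fin_cases i <;> fin_cases j <;>
          first
            | exact absurd hadj (by decide)
            | exact ⟨m1', hav⟩
            | exact ⟨m1, hva⟩
            | exact ⟨m2, hvc⟩
            | exact ⟨m2', hcv⟩
  · rw [edgeSet_fromEdgeSet]
    apply Set.eq_of_subset_of_subset
    · intro e he
      exact he.1
    · intro e he
      refine ⟨he, ?_⟩
      simp only [Set.mem_insert_iff, Set.mem_singleton_iff] at he
      rcases he with rfl | rfl
      · exact Γ.not_isDiag_of_mem_edgeSet h1
      · exact Γ.not_isDiag_of_mem_edgeSet h2

lemma copy_path3_edgeSet {B : SimpleGraph V} (h : IsCopy (pathGraph 3) B) :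
    ∃ d1 d2 : Sym2 V, d1 ≠ d2 ∧ B.edgeSet = {d1, d2} := by
  obtain ⟨φ, hφ⟩ := h
  refine ⟨s(φ 0, φ 1), s(φ 1, φ 2), ?_, ?_⟩
  · intro hEq
    rw [Sym2.eq_iff] at hEq
    rcases hEq with ⟨h1, h2⟩ | ⟨h1, h2⟩
    · exact absurd (φ.injective h1) (by decide)
    · exact absurd (φ.injective h1) (by decide)
  · apply Set.eq_of_subset_of_subset
    · intro e he
      induction e using Sym2.ind with
      | _ x y =>
        rw [mem_edgeSet, hφ] at he
        obtain ⟨i, j, hadj, rfl, rfl⟩ := he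
        rw [pathGraph_adj] at hadj
        have m1 : s(φ 0, φ 1) ∈ ({s(φ 0, φ 1), s(φ 1, φ 2)} : Set (Sym2 V)) := Or.inl rfl
        have m1' : s(φ 1, φ 0) ∈ ({s(φ 0, φ 1), s(φ 1, φ 2)} : Set (Sym2 V)) :=
          Or.inl Sym2.eq_swap
        have m2 : s(φ 1, φ 2) ∈ ({s(φ 0, φ 1), s(φ 1, φ 2)} : Set (Sym2 V)) := Or.inr rfl
        have m2' : s(φ 2, φ 1) ∈ ({s(φ 0, φ 1), s(φ 1, φ 2)} : Set (Sym2 V)) :=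
          Or.inr Sym2.eq_swap
        fin_cases i <;> fin_cases j <;>
          first
            | exact absurd hadj (by decide)
            | exact m1
            | exact m1'
            | exact m2
            | exact m2'
    · intro e he
      rcases he with rfl | he
      · rw [mem_edgeSet, hφ]
        exact ⟨0, 1, by rw [pathGraph_adj]; left; rfl, rfl, rfl⟩
      · rw [Set.mem_singleton_iff] at he
        subst he
        rw [mem_edgeSet, hφ]
        exact ⟨1, 2, by rw [pathGraph_adj]; left; rfl, rfl, rfl⟩

lemma design_exists (hconn : Γ.Connected) (hE : Even Γ.edgeFinset.card) :
    ∃ D : Set (SimpleGraph V), IsDesign Γ (pathGraph 3) D := by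
  obtain ⟨f, hf, hev⟩ := exists_even_assignment Γ hconn hE
  have hP : ∀ v : V, ∃ P : Finset (Sym2 V × Sym2 V),
      (∀ p ∈ P, p.1 ∈ Γ.edgeFinset.filter (fun e => f e = v) ∧
        p.2 ∈ Γ.edgeFinset.filter (fun e => f e = v) ∧ p.1 ≠ p.2) ∧
      (∀ e ∈ Γ.edgeFinset.filter (fun e => f e = v), ∃! p, p ∈ P ∧ (e = p.1 ∨ e = p.2)) :=
    fun v => pairup _ _ rfl (hev v)
  choose Pv hPv1 hPv2 using hP
  have hprops : ∀ v : V, ∀ p ∈ Pv v, p.1 ∈ Γ.edgeSet ∧ p.2 ∈ Γ.edgeSet ∧ p.1 ≠ p.2 ∧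
      v ∈ p.1 ∧ v ∈ p.2 ∧ f p.1 = v ∧ f p.2 = v := by
    intro v p hp
    obtain ⟨h1, h2, h3⟩ := hPv1 v p hp
    rw [Finset.mem_filter, mem_edgeFinset] at h1 h2
    refine ⟨h1.1, h2.1, h3, ?_, ?_, h1.2, h2.2⟩
    · rw [← h1.2]
      exact hf _ h1.1
    · rw [← h2.2]
      exact hf _ h2.1
  refine ⟨(fun p : Sym2 V × Sym2 V => fromEdgeSet {p.1, p.2}) '' {p | ∃ v, p ∈ Pv v}, ?_, ?_⟩
  · rintro B ⟨p, ⟨v, hpv⟩, rfl⟩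
    obtain ⟨q1, q2, q3, q4, q5, _, _⟩ := hprops v p hpv
    obtain ⟨hle, hcopy, hes⟩ := block_props Γ q1 q2 q3 q4 q5
    exact ⟨hle, hcopy, by rw [hes]; exact ⟨p.1, Or.inl rfl⟩⟩
  · intro e he
    have hef : e ∈ Γ.edgeFinset.filter (fun e' => f e' = f e) := by
      rw [Finset.mem_filter, mem_edgeFinset]
      exact ⟨he, rfl⟩
    obtain ⟨p, ⟨hpP, hpe⟩, hpu⟩ := hPv2 (f e) e hef
    obtain ⟨q1, q2, q3, q4, q5, _, _⟩ := hprops (f e) p hpP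
    obtain ⟨hle, hcopy, hes⟩ := block_props Γ q1 q2 q3 q4 q5
    refine ⟨fromEdgeSet {p.1, p.2}, ⟨⟨p, ⟨f e, hpP⟩, rfl⟩, ?_⟩, ?_⟩
    · rw [hes]
      rcases hpe with h | h
      · exact Or.inl h
      · exact Or.inr h
    · rintro B ⟨⟨q, ⟨w, hqw⟩, rfl⟩, heB⟩
      obtain ⟨r1, r2, r3, r4, r5, r6, r7⟩ := hprops w q hqw
      obtain ⟨_, _, hesq⟩ := block_props Γ r1 r2 r3 r4 r5
      rw [hesq] at heB
      have heB' : e = q.1 ∨ e = q.2 := by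
        rcases heB with h | h
        · exact Or.inl h
        · exact Or.inr (by rwa [Set.mem_singleton_iff] at h)
      have hwv : w = f e := by
        rcases heB' with h | h
        · rw [h, r6]
        · rw [h, r7]
      subst hwv
      have := hpu q ⟨hqw, heB'⟩
      rw [this]

lemma even_of_design (D : Set (SimpleGraph V)) (hD : IsDesign Γ (pathGraph 3) D) :
    Even Γ.edgeFinset.card := by
  classical
  have hBlk : ∀ e, e ∈ Γ.edgeSet → ∃ B, (B ∈ D ∧ e ∈ B.edgeSet) ∧
      ∀ B', B' ∈ D ∧ e ∈ B'.edgeSet → B' = B := fun e he => hD.2 e he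
  set Blk : Sym2 V → SimpleGraph V :=
    fun e => if h : e ∈ Γ.edgeSet then (hBlk e h).choose else ⊥ with hBlkdef
  have BlkD : ∀ e (he : e ∈ Γ.edgeSet), Blk e ∈ D := by
    intro e he
    rw [hBlkdef]
    dsimp only
    rw [dif_pos he]
    exact (hBlk e he).choose_spec.1.1
  have Blke : ∀ e (he : e ∈ Γ.edgeSet), e ∈ (Blk e).edgeSet := by
    intro e he
    rw [hBlkdef]
    dsimp only
    rw [dif_pos he]
    exact (hBlk e he).choose_spec.1.2
  have Blku : ∀ e (he : e ∈ Γ.edgeSet) B', B' ∈ D → e ∈ B'.edgeSet → B' = Blk e := by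
    intro e he B' h1 h2
    rw [hBlkdef]
    dsimp only
    rw [dif_pos he]
    exact (hBlk e he).choose_spec.2 B' ⟨h1, h2⟩
  have hpair : ∀ e, e ∈ Γ.edgeSet → ∃! e', e' ∈ (Blk e).edgeSet ∧ e' ≠ e := by
    intro e he
    obtain ⟨d1, d2, hd, hset⟩ := copy_path3_edgeSet (hD.1 _ (BlkD e he)).2.1
    have hee : e ∈ ({d1, d2} : Set (Sym2 V)) := by
      rw [← hset]
      exact Blke e he
    rcases hee with rfl | hee
    · refine ⟨d2, ⟨by rw [hset]; exact Or.inr rfl, hd.symm⟩, ?_⟩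
      intro y ⟨hy1, hy2⟩
      rw [hset] at hy1
      rcases hy1 with rfl | hy1
      · exact absurd rfl hy2
      · rwa [Set.mem_singleton_iff] at hy1
    · rw [Set.mem_singleton_iff] at hee
      subst hee
      refine ⟨d1, ⟨by rw [hset]; exact Or.inl rfl, hd⟩, ?_⟩
      intro y ⟨hy1, hy2⟩
      rw [hset] at hy1
      rcases hy1 with rfl | hy1
      · rfl
      · rw [Set.mem_singleton_iff] at hy1
        exact absurd hy1 hy2
  set i : Sym2 V → Sym2 V :=
    fun e => if h : e ∈ Γ.edgeSet then (hpair e h).choose else e with hidef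
  have imem : ∀ e (he : e ∈ Γ.edgeSet), i e ∈ (Blk e).edgeSet ∧ i e ≠ e := by
    intro e he
    rw [hidef]
    dsimp only
    rw [dif_pos he]
    exact (hpair e he).choose_spec.1
  have iuniq : ∀ e (he : e ∈ Γ.edgeSet) y, y ∈ (Blk e).edgeSet ∧ y ≠ e → y = i e := by
    intro e he y hy
    rw [hidef]
    dsimp only
    rw [dif_pos he]
    exact (hpair e he).choose_spec.2 y hy
  have hsub : ∀ e (he : e ∈ Γ.edgeSet), (Blk e).edgeSet ⊆ Γ.edgeSet := by
    intro e he
    exact SimpleGraph.edgeSet_mono (hD.1 _ (BlkD e he)).1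
  apply even_card_invol Γ.edgeFinset.card Γ.edgeFinset rfl i
  intro a ha
  rw [mem_edgeFinset] at ha
  have h1 : i a ∈ Γ.edgeSet := hsub a ha (imem a ha).1
  have hBB : Blk (i a) = Blk a := (Blku (i a) h1 (Blk a) (BlkD a ha) (imem a ha).1).symm
  refine ⟨by rw [mem_edgeFinset]; exact h1, ?_, (imem a ha).2⟩
  have : a = i (i a) := by
    apply iuniq (i a) h1 a
    rw [hBB]
    exact ⟨Blke a ha, fun h => (imem a ha).2 h.symm⟩
  exact this.symm


end Blocks

end Stmt0Aux

/-- A connected graph admits an edge-partition into copies of `P₃`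
iff its number of edges is even. -/
theorem stmt0 {V : Type*} [Fintype V] (Γ : SimpleGraph V) [DecidableRel Γ.Adj]
    (hconn : Γ.Connected) :
    (∃ D : Set (SimpleGraph V), IsDesign Γ (pathGraph 3) D) ↔
      Even Γ.edgeFinset.card := by
  classical
  constructor
  · rintro ⟨D, hD⟩
    have h := Stmt0Aux.even_of_design Γ D hD
    convert h using 2
  · intro hE
    apply Stmt0Aux.design_exists Γ hconn
    convert hE using 2
end

section
/- If a connected graph Γ has an odd number of edges, then E(Γ) can be partitioned into a single edge together with copies of P₃ (the path with 3 vertices and 2 edges). -/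
open SimpleGraph

section Aux

variable {V : Type*}

lemma reach_split {H : SimpleGraph V} {a b x y : V} (h : H.Reachable x y) :
    (H.deleteEdges {s(a,b)}).Reachable x y ∨ (H.deleteEdges {s(a,b)}).Reachable a y ∨
      (H.deleteEdges {s(a,b)}).Reachable b y := by
  obtain ⟨w⟩ := h
  induction w with
  | nil => exact Or.inl (Reachable.refl _)
  | @cons u z yy hadj p ih =>
    rcases ih with hr | hr | hr
    · by_cases hs : s(u, z) = s(a, b)
      · rw [Sym2.eq_iff] at hs
        rcases hs with ⟨rfl, rfl⟩ | ⟨rfl, rfl⟩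
        · exact Or.inr (Or.inr hr)
        · exact Or.inr (Or.inl hr)
      · exact Or.inl ((SimpleGraph.deleteEdges_adj.mpr ⟨hadj, by simpa using hs⟩).reachable.trans hr)
    · exact Or.inr (Or.inl hr)
    · exact Or.inr (Or.inr hr)

lemma reach_restore {H : SimpleGraph V} {a b x y : V}
    (hab : (H.deleteEdges {s(a,b)}).Reachable a b) (h : H.Reachable x y) :
    (H.deleteEdges {s(a,b)}).Reachable x y := by
  obtain ⟨w⟩ := h
  induction w with
  | nil => exact Reachable.refl _
  | @cons u z yy hadj p ih =>
    by_cases hs : s(u, z) = s(a, b)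
    · rw [Sym2.eq_iff] at hs
      rcases hs with ⟨rfl, rfl⟩ | ⟨rfl, rfl⟩
      · exact hab.trans ih
      · exact hab.symm.trans ih
    · exact ((SimpleGraph.deleteEdges_adj.mpr ⟨hadj, by simpa using hs⟩).reachable).trans ih

def CE (H : SimpleGraph V) (v : V) : Set (Sym2 V) :=
  {f | f ∈ H.edgeSet ∧ ∃ z ∈ f, H.Reachable v z}

lemma CE_subset {H : SimpleGraph V} {v : V} : CE H v ⊆ H.edgeSet := fun _ hf => hf.1

lemma CE_reach_all {H : SimpleGraph V} {v : V} {f : Sym2 V} (hf : f ∈ CE H v) :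
    ∀ z ∈ f, H.Reachable v z := by
  induction f with
  | _ p q =>
    obtain ⟨hfe, z, hz, hr⟩ := hf
    have hadj : H.Adj p q := H.mem_edgeSet.mp hfe
    intro z' hz'
    rw [Sym2.mem_iff] at hz hz'
    rcases hz with rfl | rfl <;> rcases hz' with rfl | rfl
    · exact hr
    · exact hr.trans hadj.reachable
    · exact hr.trans hadj.symm.reachable
    · exact hr

lemma mem_CE_of {H : SimpleGraph V} {v p q : V} (h : H.Adj p q) (hr : H.Reachable v p) :
    s(p,q) ∈ CE H v :=
  ⟨H.mem_edgeSet.mpr h, p, Sym2.mem_mk_left p q, hr⟩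

lemma CE_congr {H : SimpleGraph V} {v v' : V} (h : H.Reachable v v') : CE H v = CE H v' := by
  ext f
  constructor <;> rintro ⟨hfe, z, hz, hr⟩
  · exact ⟨hfe, z, hz, h.symm.trans hr⟩
  · exact ⟨hfe, z, hz, h.trans hr⟩

lemma CE_delete_subset {H : SimpleGraph V} {s : Set (Sym2 V)} {v : V} :
    CE (H.deleteEdges s) v ⊆ CE H v := by
  rintro f ⟨hfe, z, hz, hr⟩
  rw [edgeSet_deleteEdges] at hfe
  exact ⟨hfe.1, z, hz, hr.mono (deleteEdges_le s)⟩

lemma CE_delete_conn {H : SimpleGraph V} {u w : V}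
    (hr : (H.deleteEdges {s(u,w)}).Reachable u w) :
    CE (H.deleteEdges {s(u,w)}) u = CE H u \ {s(u,w)} := by
  ext f
  constructor
  · rintro hf
    obtain ⟨hfe, z, hz, hrz⟩ := hf
    rw [edgeSet_deleteEdges] at hfe
    exact ⟨⟨hfe.1, z, hz, hrz.mono (deleteEdges_le _)⟩, hfe.2⟩
  · rintro ⟨⟨hfe, z, hz, hrz⟩, hne⟩
    exact ⟨by rw [edgeSet_deleteEdges]; exact ⟨hfe, hne⟩, z, hz, reach_restore hr hrz⟩

lemma CE_delete_disc {H : SimpleGraph V} {u w : V} (hadj : H.Adj u w)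
    (hnr : ¬ (H.deleteEdges {s(u,w)}).Reachable u w) :
    CE H u = insert s(u,w) (CE (H.deleteEdges {s(u,w)}) u ∪ CE (H.deleteEdges {s(u,w)}) w) := by
  ext f
  induction f with
  | _ p q =>
    constructor
    · intro hf
      by_cases he : s(p,q) = s(u,w)
      · exact he ▸ Set.mem_insert _ _
      · have hadjpq : H.Adj p q := H.mem_edgeSet.mp hf.1
        have hrp : H.Reachable u p := CE_reach_all hf p (Sym2.mem_mk_left p q)
        have hmem : s(p,q) ∈ (H.deleteEdges {s(u,w)}).edgeSet := by
          rw [edgeSet_deleteEdges]; exact ⟨hf.1, he⟩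
        rcases reach_split (a := u) (b := w) hrp with h' | h' | h'
        · exact Set.mem_insert_of_mem _ (Or.inl ⟨hmem, p, Sym2.mem_mk_left p q, h'⟩)
        · exact Set.mem_insert_of_mem _ (Or.inl ⟨hmem, p, Sym2.mem_mk_left p q, h'⟩)
        · exact Set.mem_insert_of_mem _ (Or.inr ⟨hmem, p, Sym2.mem_mk_left p q, h'⟩)
    · rintro (he | hf | hf)
      · rw [he]; exact mem_CE_of hadj (Reachable.refl u)
      · exact CE_delete_subset hf
      · obtain ⟨hfe, z, hz, hrz⟩ := hf
        rw [edgeSet_deleteEdges] at hfe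
        exact ⟨hfe.1, z, hz, hadj.reachable.trans (hrz.mono (deleteEdges_le _))⟩

lemma CE_delete_disc_card [Fintype V] {H : SimpleGraph V} {u w : V} (hadj : H.Adj u w)
    (hnr : ¬ (H.deleteEdges {s(u,w)}).Reachable u w) :
    (CE H u).ncard = (CE (H.deleteEdges {s(u,w)}) u).ncard
      + (CE (H.deleteEdges {s(u,w)}) w).ncard + 1 := by
  have hdisj : Disjoint (CE (H.deleteEdges {s(u,w)}) u) (CE (H.deleteEdges {s(u,w)}) w) := by
    rw [Set.disjoint_left]
    intro f hfu hfw
    induction f with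
    | _ p q =>
      exact hnr ((CE_reach_all hfu p (Sym2.mem_mk_left p q)).trans
        (CE_reach_all hfw p (Sym2.mem_mk_left p q)).symm)
  have hnm : s(u,w) ∉ CE (H.deleteEdges {s(u,w)}) u ∪ CE (H.deleteEdges {s(u,w)}) w := by
    intro h
    have : s(u,w) ∈ (H.deleteEdges {s(u,w)}).edgeSet := by
      rcases h with h | h <;> exact CE_subset h
    rw [edgeSet_deleteEdges] at this
    exact this.2 rfl
  rw [CE_delete_disc hadj hnr, Set.ncard_insert_of_notMem hnm, Set.ncard_union_eq hdisj]

lemma CE_delete_far {H : SimpleGraph V} {u w v : V} (hadj : H.Adj u w)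
    (hfar : ¬ H.Reachable v u) :
    CE (H.deleteEdges {s(u,w)}) v = CE H v := by
  have hiff : ∀ x, H.Reachable v x → (H.deleteEdges {s(u,w)}).Reachable v x := by
    intro x h
    rcases reach_split (a := u) (b := w) h with h' | h' | h'
    · exact h'
    · exact absurd (h.trans (h'.mono (deleteEdges_le _)).symm) hfar
    · exact absurd ((h.trans (h'.mono (deleteEdges_le _)).symm).trans hadj.symm.reachable) hfar
  ext f
  constructor
  · exact fun hf => CE_delete_subset hf
  · rintro ⟨hfe, z, hz, hrz⟩
    have hne : f ≠ s(u,w) := by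
      rintro rfl
      exact hfar (CE_reach_all ⟨hfe, z, hz, hrz⟩ u (Sym2.mem_mk_left u w))
    exact ⟨by rw [edgeSet_deleteEdges]; exact ⟨hfe, hne⟩, z, hz, hiff z hrz⟩

lemma exists_adj_of_CE_nonempty {H : SimpleGraph V} {u : V} (h : (CE H u).Nonempty) :
    ∃ w, H.Adj u w := by
  obtain ⟨f, hf⟩ := h
  induction f with
  | _ p q =>
    have hadj : H.Adj p q := H.mem_edgeSet.mp hf.1
    by_cases hup : u = p
    · exact ⟨q, hup ▸ hadj⟩
    · obtain ⟨wk⟩ := CE_reach_all hf p (Sym2.mem_mk_left p q)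
      cases wk with
      | nil => exact absurd rfl hup
      | cons h _ => exact ⟨_, h⟩

lemma lemB [Fintype V] : ∀ (n : ℕ) (H : SimpleGraph V) (u : V),
    (CE H u).ncard ≤ n → Odd (CE H u).ncard →
    ∃ w, H.Adj u w ∧ ∀ v, H.Reachable u v →
      Even (CE (H.deleteEdges {s(u,w)}) v).ncard := by
  intro n
  induction n with
  | zero =>
    intro H u hle hodd
    interval_cases h : (CE H u).ncard
    · simp at hodd
  | succ n ih =>
    intro H u hle hodd
    have hne : (CE H u).Nonempty := by
      rw [Set.nonempty_iff_ne_empty]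
      intro h
      rw [h, Set.ncard_empty] at hodd
      simp at hodd
    obtain ⟨w, hadj⟩ := exists_adj_of_CE_nonempty hne
    by_cases hr : (H.deleteEdges {s(u,w)}).Reachable u w
    · refine ⟨w, hadj, fun v hv => ?_⟩
      have h1 : CE (H.deleteEdges {s(u,w)}) v = CE (H.deleteEdges {s(u,w)}) u :=
        CE_congr (reach_restore hr hv).symm
      rw [h1, CE_delete_conn hr,
        Set.ncard_diff_singleton_of_mem (mem_CE_of hadj (Reachable.refl u))]
      rw [Nat.odd_iff] at hodd
      rw [Nat.even_sub (by rw [Nat.one_le_iff_ne_zero]; omega)]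
      simp [Nat.even_iff, hodd]
    · have hcard := CE_delete_disc_card hadj hr
      by_cases hpar : Even (CE (H.deleteEdges {s(u,w)}) u).ncard
      · refine ⟨w, hadj, fun v hv => ?_⟩
        have hbe : Even (CE (H.deleteEdges {s(u,w)}) w).ncard := by
          rw [Nat.odd_iff] at hodd
          rw [Nat.even_iff] at hpar ⊢
          omega
        rcases reach_split (a := u) (b := w) hv with h' | h' | h'
        · rwa [CE_congr h'.symm]
        · rwa [CE_congr h'.symm]
        · rwa [CE_congr h'.symm]
      · rw [Nat.not_even_iff_odd] at hpar
        have halt : (CE (H.deleteEdges {s(u,w)}) u).ncard ≤ n := by omega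
        obtain ⟨w', hadj', hIH⟩ := ih (H.deleteEdges {s(u,w)}) u halt hpar
        have hadj'G : H.Adj u w' := (SimpleGraph.deleteEdges_adj.mp hadj').1
        have hne' : s(u,w) ≠ s(u,w') := by
          intro h
          exact (SimpleGraph.deleteEdges_adj.mp hadj').2 h.symm
        -- K = H - s(u,w'), and K - s(u,w) = (H - s(u,w)) - s(u,w')
        have hKe : (H.deleteEdges {s(u,w')}).deleteEdges {s(u,w)}
            = (H.deleteEdges {s(u,w)}).deleteEdges {s(u,w')} := by
          rw [deleteEdges_deleteEdges, deleteEdges_deleteEdges, Set.union_comm]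
        have hKadj : (H.deleteEdges {s(u,w')}).Adj u w :=
          SimpleGraph.deleteEdges_adj.mpr ⟨hadj, by simpa using hne'⟩
        have hKnr : ¬ ((H.deleteEdges {s(u,w')}).deleteEdges {s(u,w)}).Reachable u w := by
          rw [hKe]
          exact fun h => hr (h.mono (deleteEdges_le _))
        have hKcard := CE_delete_disc_card hKadj hKnr
        have hbodd : Odd (CE (H.deleteEdges {s(u,w)}) w).ncard := by
          rw [Nat.odd_iff] at hodd hpar ⊢
          omega
        have hwfar : CE ((H.deleteEdges {s(u,w)}).deleteEdges {s(u,w')}) w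
            = CE (H.deleteEdges {s(u,w)}) w :=
          CE_delete_far hadj' (fun h => hr h.symm)
        have hueven : Even (CE ((H.deleteEdges {s(u,w)}).deleteEdges {s(u,w')}) u).ncard :=
          hIH u (Reachable.refl u)
        have hKueven : Even (CE (H.deleteEdges {s(u,w')}) u).ncard := by
          rw [hKcard, hKe, hwfar]
          rcases hueven with ⟨k, hk⟩
          rcases hbodd with ⟨m, hm⟩
          exact ⟨k + m + 1, by omega⟩
        refine ⟨w', hadj'G, fun v hv => ?_⟩
        rcases reach_split (a := u) (b := w') hv with h' | h' | h'
        · rwa [CE_congr h'.symm]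
        · rwa [CE_congr h'.symm]
        · -- v reachable from w' in K
          by_cases huv : (H.deleteEdges {s(u,w')}).Reachable u v
          · rwa [CE_congr huv.symm]
          · have hnuw' : ¬ (H.deleteEdges {s(u,w')}).Reachable u w' :=
              fun h => huv (h.trans h')
            have h2 : CE (H.deleteEdges {s(u,w')}) v = CE (H.deleteEdges {s(u,w')}) w' :=
              CE_congr h'.symm
            have h3 : CE ((H.deleteEdges {s(u,w')}).deleteEdges {s(u,w)}) w'
                = CE (H.deleteEdges {s(u,w')}) w' :=
              CE_delete_far hKadj (fun h => hnuw' h.symm)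
            rw [h2, ← h3, hKe]
            exact hIH w' hadj'.reachable

lemma design_insert {G : SimpleGraph V} {x y w : V} (hxy : G.Adj x y) (hxw : G.Adj x w)
    (hyw : w ≠ y) {D : Set (SimpleGraph V)}
    (hD : IsDesign ((G.deleteEdges {s(x,y)}).deleteEdges {s(x,w)}) (pathGraph 3) D) :
    ∃ D', IsDesign G (pathGraph 3) D' := by
  have hne1 : s(x,y) ≠ s(x,w) := by
    intro h
    rw [Sym2.eq_iff] at h
    rcases h with ⟨-, h2⟩ | ⟨h1, -⟩
    · exact hyw h2.symm
    · exact hxw.ne h1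
  set B₀ : SimpleGraph V := SimpleGraph.fromEdgeSet {s(x,y), s(x,w)} with hB₀
  have hB0edge : B₀.edgeSet = {s(x,y), s(x,w)} := by
    rw [hB₀, edgeSet_fromEdgeSet]
    ext f
    constructor
    · exact fun hf => hf.1
    · intro hf
      refine ⟨hf, ?_⟩
      simp only [Set.mem_insert_iff, Set.mem_singleton_iff] at hf
      rcases hf with rfl | rfl
      · exact fun hd => hxy.ne (Sym2.mk_isDiag_iff.mp hd)
      · exact fun hd => hxw.ne (Sym2.mk_isDiag_iff.mp hd)
  have hGedge : ((G.deleteEdges {s(x,y)}).deleteEdges {s(x,w)}).edgeSet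
      = G.edgeSet \ {s(x,y), s(x,w)} := by
    rw [deleteEdges_deleteEdges, edgeSet_deleteEdges, Set.singleton_union]
  have hB0le : B₀ ≤ G := by
    intro p q hpq
    rw [hB₀, fromEdgeSet_adj] at hpq
    obtain ⟨h, -⟩ := hpq
    simp only [Set.mem_insert_iff, Set.mem_singleton_iff, Sym2.eq_iff] at h
    rcases h with (⟨rfl, rfl⟩ | ⟨rfl, rfl⟩) | (⟨rfl, rfl⟩ | ⟨rfl, rfl⟩)
    · exact hxy
    · exact hxy.symm
    · exact hxw
    · exact hxw.symm
  have hcopy : IsCopy (pathGraph 3) B₀ := by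
    have hinj : Function.Injective ![y, x, w] := by
      intro a b hab
      fin_cases a <;> fin_cases b <;> simp_all <;>
        first
          | rfl
          | exact absurd hab.symm hxy.ne
          | exact absurd hab hxy.ne
          | exact absurd hab hxw.ne
          | exact absurd hab.symm hxw.ne
          | exact absurd hab hyw.symm
          | exact absurd hab.symm hyw.symm
    refine ⟨⟨![y, x, w], hinj⟩, fun p q => ?_⟩
    constructor
    · intro hpq
      rw [hB₀, fromEdgeSet_adj] at hpq
      obtain ⟨h, -⟩ := hpq
      simp only [Set.mem_insert_iff, Set.mem_singleton_iff, Sym2.eq_iff] at h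
      rcases h with (⟨rfl, rfl⟩ | ⟨rfl, rfl⟩) | (⟨rfl, rfl⟩ | ⟨rfl, rfl⟩)
      · exact ⟨1, 0, by simp [pathGraph_adj], rfl, rfl⟩
      · exact ⟨0, 1, by simp [pathGraph_adj], rfl, rfl⟩
      · exact ⟨1, 2, by simp [pathGraph_adj], rfl, rfl⟩
      · exact ⟨2, 1, by simp [pathGraph_adj], rfl, rfl⟩
    · rintro ⟨a, b, hab, rfl, rfl⟩
      rw [hB₀, fromEdgeSet_adj]
      fin_cases a <;> fin_cases b <;> simp [pathGraph_adj] at hab <;>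
        simp only [Function.Embedding.coeFn_mk, Matrix.cons_val_zero, Matrix.cons_val_one,
          Matrix.head_cons, Matrix.cons_val_two, Matrix.tail_cons]
      · exact ⟨Or.inl (Sym2.eq_swap), hxy.ne'⟩
      · exact ⟨Or.inl rfl, hxy.ne⟩
      · exact ⟨Or.inr rfl, hxw.ne⟩
      · exact ⟨Or.inr (Sym2.eq_swap), hxw.ne'⟩
  refine ⟨insert B₀ D, ⟨?_, ?_⟩⟩
  · rintro B (rfl | hB)
    · exact ⟨hB0le, hcopy, ⟨s(x,y), by rw [hB0edge]; exact Or.inl rfl⟩⟩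
    · obtain ⟨h1, h2, h3⟩ := hD.1 B hB
      exact ⟨h1.trans ((deleteEdges_le _).trans (deleteEdges_le _)), h2, h3⟩
  · intro e he
    by_cases hmem : e = s(x,y) ∨ e = s(x,w)
    · refine ⟨B₀, ⟨Set.mem_insert _ _, by rw [hB0edge]; exact hmem⟩, ?_⟩
      rintro B ⟨(rfl | hB), heB⟩
      · rfl
      · have := SimpleGraph.edgeSet_mono (hD.1 B hB).1 heB
        rw [hGedge] at this
        exact absurd hmem this.2
    · have he'' : e ∈ ((G.deleteEdges {s(x,y)}).deleteEdges {s(x,w)}).edgeSet := by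
        rw [hGedge]; exact ⟨he, hmem⟩
      obtain ⟨B, ⟨hBD, heB⟩, huniq⟩ := hD.2 e he''
      refine ⟨B, ⟨Set.mem_insert_of_mem _ hBD, heB⟩, ?_⟩
      rintro B' ⟨(rfl | hB'), heB'⟩
      · rw [hB0edge] at heB'
        exact absurd heB' hmem
      · exact huniq B' ⟨hB', heB'⟩

lemma lemAstep [Fintype V] {G : SimpleGraph V} {x y : V} (hadj : G.Adj x y)
    (hodd : Odd (CE (G.deleteEdges {s(x,y)}) x).ncard)
    (hgood : ∀ v, Even (CE G v).ncard) :
    ∃ w, w ≠ y ∧ G.Adj x w ∧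
      ∀ v, Even (CE ((G.deleteEdges {s(x,y)}).deleteEdges {s(x,w)}) v).ncard := by
  obtain ⟨w, hadj', hB⟩ := lemB _ (G.deleteEdges {s(x,y)}) x le_rfl hodd
  have hadjG : G.Adj x w := (SimpleGraph.deleteEdges_adj.mp hadj').1
  have hwy : w ≠ y := by
    rintro rfl
    exact (SimpleGraph.deleteEdges_adj.mp hadj').2 rfl
  refine ⟨w, hwy, hadjG, fun v => ?_⟩
  by_cases hv : (G.deleteEdges {s(x,y)}).Reachable x v
  · exact hB v hv
  · by_cases hyv : (G.deleteEdges {s(x,y)}).Reachable y v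
    · have hnxy : ¬ (G.deleteEdges {s(x,y)}).Reachable x y := fun h => hv (h.trans hyv)
      have hcard := CE_delete_disc_card hadj hnxy
      have hb : Even (CE (G.deleteEdges {s(x,y)}) y).ncard := by
        have hg := hgood x
        rw [Nat.even_iff] at hg ⊢
        rw [Nat.odd_iff] at hodd
        omega
      have h1 : CE ((G.deleteEdges {s(x,y)}).deleteEdges {s(x,w)}) v
          = CE (G.deleteEdges {s(x,y)}) v :=
        CE_delete_far hadj' (fun h => hv h.symm)
      rw [h1, CE_congr hyv.symm]
      exact hb
    · have hGxv : ¬ G.Reachable x v := by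
        intro h
        rcases reach_split (a := x) (b := y) h with h' | h' | h'
        · exact hv h'
        · exact hv h'
        · exact hyv h'
      have h1 : CE ((G.deleteEdges {s(x,y)}).deleteEdges {s(x,w)}) v
          = CE (G.deleteEdges {s(x,y)}) v :=
        CE_delete_far hadj' (fun h => hv h.symm)
      have h2 : CE (G.deleteEdges {s(x,y)}) v = CE G v :=
        CE_delete_far hadj (fun h => hGxv h.symm)
      rw [h1, h2]
      exact hgood v

lemma lemA [Fintype V] : ∀ (n : ℕ) (G : SimpleGraph V), G.edgeSet.ncard ≤ n →
    (∀ v, Even (CE G v).ncard) → ∃ D, IsDesign G (pathGraph 3) D := by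
  intro n
  induction n with
  | zero =>
    intro G hle _
    have hE : G.edgeSet = ∅ := by
      rw [← Set.ncard_eq_zero (Set.toFinite _)]
      omega
    exact ⟨∅, fun B hB => absurd hB (Set.notMem_empty B),
      fun e he => absurd he (by rw [hE]; exact Set.notMem_empty e)⟩
  | succ n ih =>
    intro G hle hgood
    rcases Set.eq_empty_or_nonempty G.edgeSet with hE | hE
    · exact ⟨∅, fun B hB => absurd hB (Set.notMem_empty B),
        fun e he => absurd he (by rw [hE]; exact Set.notMem_empty e)⟩
    · obtain ⟨f0, hf0⟩ := hE
      induction f0 using Sym2.ind with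
      | _ x y =>
        have hadj : G.Adj x y := G.mem_edgeSet.mp hf0
        -- find a labelling of the edge so that the x-side is odd after deletion
        have key : ∃ x' y', G.Adj x' y' ∧ s(x',y') = s(x,y) ∧
            Odd (CE (G.deleteEdges {s(x',y')}) x').ncard := by
          by_cases hc : (G.deleteEdges {s(x,y)}).Reachable x y
          · refine ⟨x, y, hadj, rfl, ?_⟩
            rw [CE_delete_conn hc,
              Set.ncard_diff_singleton_of_mem (mem_CE_of hadj (Reachable.refl x))]
            have hg := hgood x
            have hpos : s(x,y) ∈ CE G x := mem_CE_of hadj (Reachable.refl x)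
            have hpos' : 0 < (CE G x).ncard :=
              (Set.ncard_pos (Set.toFinite _)).mpr ⟨_, hpos⟩
            rw [Nat.even_iff] at hg
            rw [Nat.odd_iff]
            omega
          · have hcard := CE_delete_disc_card hadj hc
            by_cases hpar : Odd (CE (G.deleteEdges {s(x,y)}) x).ncard
            · exact ⟨x, y, hadj, rfl, hpar⟩
            · refine ⟨y, x, hadj.symm, Sym2.eq_swap, ?_⟩
              rw [Nat.not_odd_iff_even] at hpar
              have hg := hgood x
              rw [Sym2.eq_swap]
              rw [Nat.even_iff] at hg hpar
              rw [Nat.odd_iff]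
              omega
        obtain ⟨x', y', hadj', hswap, hodd⟩ := key
        obtain ⟨w, hwy, hxw, hgood''⟩ := lemAstep hadj' hodd hgood
        have hne1 : s(x',w) ≠ s(x',y') := by
          intro h
          rw [Sym2.eq_iff] at h
          rcases h with ⟨-, h2⟩ | ⟨h1, -⟩
          · exact hwy h2
          · exact hadj'.ne h1
        have hcard2 : ((G.deleteEdges {s(x',y')}).deleteEdges {s(x',w)}).edgeSet.ncard
            = G.edgeSet.ncard - 2 := by
          rw [edgeSet_deleteEdges, edgeSet_deleteEdges]
          rw [Set.diff_diff, Set.union_comm, ← Set.diff_diff]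
          rw [Set.ncard_diff_singleton_of_mem
            (show s(x',y') ∈ G.edgeSet \ {s(x',w)} from
              ⟨G.mem_edgeSet.mpr hadj', fun h => hne1 (Set.mem_singleton_iff.mp h).symm⟩)]
          rw [Set.ncard_diff_singleton_of_mem (G.mem_edgeSet.mpr hxw)]
          omega
        have hle2 : ((G.deleteEdges {s(x',y')}).deleteEdges {s(x',w)}).edgeSet.ncard ≤ n := by
          omega
        obtain ⟨D, hD⟩ := ih ((G.deleteEdges {s(x',y')}).deleteEdges {s(x',w)}) hle2 hgood''
        exact design_insert hadj' hxw hwy hD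

end Aux

/-- A connected graph with an odd number of edges can be partitioned into a
single edge together with copies of `P₃`. -/
theorem stmt1 {V : Type*} [Fintype V] (Γ : SimpleGraph V) [DecidableRel Γ.Adj]
    (hconn : Γ.Connected) (hodd : Odd Γ.edgeFinset.card) :
    ∃ e ∈ Γ.edgeSet, ∃ D : Set (SimpleGraph V),
      IsDesign (Γ.deleteEdges {e}) (pathGraph 3) D := by
  have hnonempty : Nonempty V := hconn.nonempty
  obtain ⟨u⟩ := hnonempty
  have hCE : CE Γ u = Γ.edgeSet := by
    ext f
    induction f using Sym2.ind with
    | _ p q =>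
      constructor
      · exact fun hf => hf.1
      · exact fun hf => ⟨hf, p, Sym2.mem_mk_left p q, hconn.preconnected u p⟩
  have hcard : (CE Γ u).ncard = Γ.edgeFinset.card := by
    rw [hCE, ← coe_edgeFinset, Set.ncard_coe_finset]
  have hodd' : Odd (CE Γ u).ncard := by rw [hcard]; exact hodd
  obtain ⟨w, hadj, hgood⟩ := lemB (CE Γ u).ncard Γ u le_rfl hodd'
  refine ⟨s(u,w), Γ.mem_edgeSet.mpr hadj, ?_⟩
  exact lemA (Γ.deleteEdges {s(u,w)}).edgeSet.ncard (Γ.deleteEdges {s(u,w)}) le_rfl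
    (fun v => hgood v (hconn.preconnected u v))
end

section
/- A (K_n, P₃)-design exists if and only if n ≡ 0 or 1 (mod 4). -/
open SimpleGraph

def Pth (a b c : ℕ) : SimpleGraph ℕ := fromEdgeSet {s(a,b), s(b,c)}

lemma pth_edgeSet {a b c : ℕ} (hab : a ≠ b) (hbc : b ≠ c) :
    (Pth a b c).edgeSet = {s(a,b), s(b,c)} := by
  rw [Pth, edgeSet_fromEdgeSet]
  ext e
  simp only [Set.mem_diff, Set.mem_insert_iff, Set.mem_singleton_iff, Set.mem_setOf_eq]
  constructor
  · rintro ⟨h, _⟩; exact h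
  · rintro (rfl | rfl) <;> simp [Sym2.isDiag_iff_proj_eq, hab, hbc]

lemma pth_adj {a b c x y : ℕ} (hab : a ≠ b) (hbc : b ≠ c) :
    (Pth a b c).Adj x y ↔ (s(x,y) = s(a,b) ∨ s(x,y) = s(b,c)) := by
  rw [← SimpleGraph.mem_edgeSet, pth_edgeSet hab hbc]
  simp

lemma isCopy_pth {a b c : ℕ} (hab : a ≠ b) (hbc : b ≠ c) (hac : a ≠ c) :
    IsCopy (pathGraph 3) (Pth a b c) := by
  refine ⟨⟨![a,b,c], ?_⟩, ?_⟩
  · intro i j hij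
    fin_cases i <;> fin_cases j <;> simp_all <;> omega
  · intro x y
    rw [pth_adj hab hbc]
    constructor
    · rintro (h | h) <;> rw [Sym2.eq_iff] at h
      · rcases h with ⟨rfl, rfl⟩ | ⟨rfl, rfl⟩
        · exact ⟨0, 1, by simp [pathGraph_adj], rfl, rfl⟩
        · exact ⟨1, 0, by simp [pathGraph_adj], rfl, rfl⟩
      · rcases h with ⟨rfl, rfl⟩ | ⟨rfl, rfl⟩
        · exact ⟨1, 2, by simp [pathGraph_adj], rfl, rfl⟩
        · exact ⟨2, 1, by simp [pathGraph_adj], rfl, rfl⟩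
    · rintro ⟨i, j, hij, rfl, rfl⟩
      rw [pathGraph_adj] at hij
      fin_cases i <;> fin_cases j <;> simp_all [Sym2.eq_iff, DFunLike.coe] <;> omega

lemma kon_adj {s : Set ℕ} {x y : ℕ} : (Kon s).Adj x y ↔ x ≠ y ∧ x ∈ s ∧ y ∈ s := Iff.rfl

lemma pth_le {a b c m : ℕ} (hab : a ≠ b) (hbc : b ≠ c) (ha : a < m) (hb : b < m) (hc : c < m) :
    Pth a b c ≤ Kon (Set.Iio m) := by
  intro x y hxy
  rw [pth_adj hab hbc] at hxy
  have hne : x ≠ y := by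
    rcases hxy with h | h <;> rw [Sym2.eq_iff] at h <;> rcases h with ⟨rfl, rfl⟩ | ⟨rfl, rfl⟩ <;>
      first | exact hab | exact hab.symm | exact hbc | exact hbc.symm
  refine ⟨hne, ?_, ?_⟩ <;>
    rcases hxy with h | h <;> rw [Sym2.eq_iff] at h <;>
      rcases h with ⟨rfl, rfl⟩ | ⟨rfl, rfl⟩ <;> assumption

lemma pth_nonempty {a b c : ℕ} (hab : a ≠ b) (hbc : b ≠ c) :
    (Pth a b c).edgeSet.Nonempty := by
  rw [pth_edgeSet hab hbc]; exact ⟨s(a,b), Or.inl rfl⟩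

def NewB (n : ℕ) : Set (SimpleGraph ℕ) :=
  {Pth (n+1) n (n+2), Pth (n+3) (n+1) (n+2), Pth (n+2) (n+3) n} ∪
    ⋃ v ∈ Set.Iio n, {Pth n v (n+1), Pth (n+2) v (n+3)}

lemma mem_newB {n : ℕ} {B : SimpleGraph ℕ} : B ∈ NewB n ↔
    B = Pth (n+1) n (n+2) ∨ B = Pth (n+3) (n+1) (n+2) ∨ B = Pth (n+2) (n+3) n ∨
      ∃ v < n, B = Pth n v (n+1) ∨ B = Pth (n+2) v (n+3) := by
  simp only [NewB, Set.mem_union, Set.mem_insert_iff, Set.mem_singleton_iff,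
    Set.mem_iUnion, Set.mem_Iio, exists_prop]
  constructor
  · rintro ((h|h|h) | ⟨v,hv,h⟩)
    · tauto
    · tauto
    · tauto
    · exact Or.inr (Or.inr (Or.inr ⟨v, hv, h⟩))
  · rintro (h|h|h|⟨v,hv,h⟩)
    · tauto
    · tauto
    · tauto
    · exact Or.inr ⟨v, hv, h⟩

lemma step {n : ℕ} {D : Set (SimpleGraph ℕ)}
    (hD : IsDesign (Kon (Set.Iio n)) (pathGraph 3) D) :
    IsDesign (Kon (Set.Iio (n+4))) (pathGraph 3) (D ∪ NewB n) := by
  obtain ⟨hD1, hD2⟩ := hD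
  have oldmem : ∀ B ∈ D, ∀ a b : ℕ, s(a,b) ∈ B.edgeSet → a < n ∧ b < n := by
    intro B hB a b hab
    have h := edgeSet_subset_edgeSet.2 (hD1 B hB).1 hab
    rw [mem_edgeSet, kon_adj] at h
    exact ⟨h.2.1, h.2.2⟩
  constructor
  · intro B hB
    rcases hB with hB | hB
    · refine ⟨le_trans (hD1 B hB).1 ?_, (hD1 B hB).2⟩
      intro x y hxy
      exact ⟨hxy.1, by have := hxy.2.1; simp only [Set.mem_Iio] at *; omega,
        by have := hxy.2.2; simp only [Set.mem_Iio] at *; omega⟩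
    · rw [mem_newB] at hB
      rcases hB with rfl | rfl | rfl | ⟨v, hv, rfl | rfl⟩ <;>
        exact ⟨pth_le (by omega) (by omega) (by omega) (by omega) (by omega),
          isCopy_pth (by omega) (by omega) (by omega), pth_nonempty (by omega) (by omega)⟩
  · have key : ∀ x y : ℕ, x < y → y < n + 4 →
        ∃! B, B ∈ D ∪ NewB n ∧ s(x,y) ∈ B.edgeSet := by
      intro x y hxy hy4
      by_cases hyn : y < n
      · obtain ⟨B, ⟨hBD, hBe⟩, hBu⟩ := hD2 s(x,y)
          (by rw [mem_edgeSet, kon_adj]; exact ⟨by omega, Set.mem_Iio.2 (by omega), Set.mem_Iio.2 (by omega)⟩)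
        refine ⟨B, ⟨Or.inl hBD, hBe⟩, ?_⟩
        rintro B' ⟨hB' | hB', he'⟩
        · exact hBu B' ⟨hB', he'⟩
        · rw [mem_newB] at hB'
          rcases hB' with rfl | rfl | rfl | ⟨v, hv, rfl | rfl⟩ <;>
            rw [pth_edgeSet (by omega) (by omega)] at he' <;>
            simp only [Set.mem_insert_iff, Set.mem_singleton_iff, Sym2.eq_iff, eq_self_iff_true, true_and, and_true] at he' <;>
            omega
      · push_neg at hyn
        by_cases hxn : x < n
        · by_cases hy2 : y < n + 2
          · -- target Pth n x (n+1)
            refine ⟨Pth n x (n+1),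
              ⟨Or.inr (mem_newB.2 (Or.inr (Or.inr (Or.inr ⟨x, hxn, Or.inl rfl⟩)))), ?_⟩, ?_⟩
            · rw [pth_edgeSet (by omega) (by omega)]
              simp only [Set.mem_insert_iff, Set.mem_singleton_iff, Sym2.eq_iff, eq_self_iff_true, true_and, and_true]; omega
            · rintro B' ⟨hB' | hB', he'⟩
              · exact absurd (oldmem B' hB' x y he') (by omega)
              · rw [mem_newB] at hB'
                rcases hB' with rfl | rfl | rfl | ⟨v, hv, rfl | rfl⟩ <;>
                  rw [pth_edgeSet (by omega) (by omega)] at he' <;>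
                  simp only [Set.mem_insert_iff, Set.mem_singleton_iff, Sym2.eq_iff, eq_self_iff_true, true_and, and_true] at he' <;>
                  first
                    | omega
                    | (obtain rfl : v = x := (by omega); rfl)
          · -- target Pth (n+2) x (n+3)
            refine ⟨Pth (n+2) x (n+3),
              ⟨Or.inr (mem_newB.2 (Or.inr (Or.inr (Or.inr ⟨x, hxn, Or.inr rfl⟩)))), ?_⟩, ?_⟩
            · rw [pth_edgeSet (by omega) (by omega)]
              simp only [Set.mem_insert_iff, Set.mem_singleton_iff, Sym2.eq_iff, eq_self_iff_true, true_and, and_true]; omega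
            · rintro B' ⟨hB' | hB', he'⟩
              · exact absurd (oldmem B' hB' x y he') (by omega)
              · rw [mem_newB] at hB'
                rcases hB' with rfl | rfl | rfl | ⟨v, hv, rfl | rfl⟩ <;>
                  rw [pth_edgeSet (by omega) (by omega)] at he' <;>
                  simp only [Set.mem_insert_iff, Set.mem_singleton_iff, Sym2.eq_iff, eq_self_iff_true, true_and, and_true] at he' <;>
                  first
                    | omega
                    | (obtain rfl : v = x := (by omega); rfl)
        · push_neg at hxn
          have h6 : (x = n ∧ y = n+1) ∨ (x = n ∧ y = n+2) ∨ (x = n ∧ y = n+3) ∨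
              (x = n+1 ∧ y = n+2) ∨ (x = n+1 ∧ y = n+3) ∨ (x = n+2 ∧ y = n+3) := by omega
          rcases h6 with ⟨hx', hy'⟩ | ⟨hx', hy'⟩ | ⟨hx', hy'⟩ | ⟨hx', hy'⟩ | ⟨hx', hy'⟩ |
            ⟨hx', hy'⟩
          · refine ⟨Pth (n+1) n (n+2), ⟨Or.inr (mem_newB.2 (Or.inl rfl)), ?_⟩, ?_⟩
            · rw [pth_edgeSet (by omega) (by omega)]
              simp only [Set.mem_insert_iff, Set.mem_singleton_iff, Sym2.eq_iff, eq_self_iff_true, true_and, and_true]; omega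
            · rintro B' ⟨hB' | hB', he'⟩
              · exact absurd (oldmem B' hB' _ _ he') (by omega)
              · rw [mem_newB] at hB'
                rcases hB' with rfl | rfl | rfl | ⟨v, hv, rfl | rfl⟩ <;>
                  rw [pth_edgeSet (by omega) (by omega)] at he' <;>
                  simp only [Set.mem_insert_iff, Set.mem_singleton_iff, Sym2.eq_iff, eq_self_iff_true, true_and, and_true] at he' <;>
                  first | rfl | omega
          · refine ⟨Pth (n+1) n (n+2), ⟨Or.inr (mem_newB.2 (Or.inl rfl)), ?_⟩, ?_⟩
            · rw [pth_edgeSet (by omega) (by omega)]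
              simp only [Set.mem_insert_iff, Set.mem_singleton_iff, Sym2.eq_iff, eq_self_iff_true, true_and, and_true]; omega
            · rintro B' ⟨hB' | hB', he'⟩
              · exact absurd (oldmem B' hB' _ _ he') (by omega)
              · rw [mem_newB] at hB'
                rcases hB' with rfl | rfl | rfl | ⟨v, hv, rfl | rfl⟩ <;>
                  rw [pth_edgeSet (by omega) (by omega)] at he' <;>
                  simp only [Set.mem_insert_iff, Set.mem_singleton_iff, Sym2.eq_iff, eq_self_iff_true, true_and, and_true] at he' <;>
                  first | rfl | omega
          · refine ⟨Pth (n+2) (n+3) n, ⟨Or.inr (mem_newB.2 (Or.inr (Or.inr (Or.inl rfl)))), ?_⟩, ?_⟩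
            · rw [pth_edgeSet (by omega) (by omega)]
              simp only [Set.mem_insert_iff, Set.mem_singleton_iff, Sym2.eq_iff, eq_self_iff_true, true_and, and_true]; omega
            · rintro B' ⟨hB' | hB', he'⟩
              · exact absurd (oldmem B' hB' _ _ he') (by omega)
              · rw [mem_newB] at hB'
                rcases hB' with rfl | rfl | rfl | ⟨v, hv, rfl | rfl⟩ <;>
                  rw [pth_edgeSet (by omega) (by omega)] at he' <;>
                  simp only [Set.mem_insert_iff, Set.mem_singleton_iff, Sym2.eq_iff, eq_self_iff_true, true_and, and_true] at he' <;>
                  first | rfl | omega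
          · refine ⟨Pth (n+3) (n+1) (n+2), ⟨Or.inr (mem_newB.2 (Or.inr (Or.inl rfl))), ?_⟩, ?_⟩
            · rw [pth_edgeSet (by omega) (by omega)]
              simp only [Set.mem_insert_iff, Set.mem_singleton_iff, Sym2.eq_iff, eq_self_iff_true, true_and, and_true]; omega
            · rintro B' ⟨hB' | hB', he'⟩
              · exact absurd (oldmem B' hB' _ _ he') (by omega)
              · rw [mem_newB] at hB'
                rcases hB' with rfl | rfl | rfl | ⟨v, hv, rfl | rfl⟩ <;>
                  rw [pth_edgeSet (by omega) (by omega)] at he' <;>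
                  simp only [Set.mem_insert_iff, Set.mem_singleton_iff, Sym2.eq_iff, eq_self_iff_true, true_and, and_true] at he' <;>
                  first | rfl | omega
          · refine ⟨Pth (n+3) (n+1) (n+2), ⟨Or.inr (mem_newB.2 (Or.inr (Or.inl rfl))), ?_⟩, ?_⟩
            · rw [pth_edgeSet (by omega) (by omega)]
              simp only [Set.mem_insert_iff, Set.mem_singleton_iff, Sym2.eq_iff, eq_self_iff_true, true_and, and_true]; omega
            · rintro B' ⟨hB' | hB', he'⟩
              · exact absurd (oldmem B' hB' _ _ he') (by omega)
              · rw [mem_newB] at hB'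
                rcases hB' with rfl | rfl | rfl | ⟨v, hv, rfl | rfl⟩ <;>
                  rw [pth_edgeSet (by omega) (by omega)] at he' <;>
                  simp only [Set.mem_insert_iff, Set.mem_singleton_iff, Sym2.eq_iff, eq_self_iff_true, true_and, and_true] at he' <;>
                  first | rfl | omega
          · refine ⟨Pth (n+2) (n+3) n, ⟨Or.inr (mem_newB.2 (Or.inr (Or.inr (Or.inl rfl)))), ?_⟩, ?_⟩
            · rw [pth_edgeSet (by omega) (by omega)]
              simp only [Set.mem_insert_iff, Set.mem_singleton_iff, Sym2.eq_iff, eq_self_iff_true, true_and, and_true]; omega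
            · rintro B' ⟨hB' | hB', he'⟩
              · exact absurd (oldmem B' hB' _ _ he') (by omega)
              · rw [mem_newB] at hB'
                rcases hB' with rfl | rfl | rfl | ⟨v, hv, rfl | rfl⟩ <;>
                  rw [pth_edgeSet (by omega) (by omega)] at he' <;>
                  simp only [Set.mem_insert_iff, Set.mem_singleton_iff, Sym2.eq_iff, eq_self_iff_true, true_and, and_true] at he' <;>
                  first | rfl | omega
    intro e he
    induction e using Sym2.ind with
    | _ x y =>
      rw [mem_edgeSet, kon_adj] at he
      obtain ⟨hne, hx, hy⟩ := he
      simp only [Set.mem_Iio] at hx hy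
      rcases Nat.lt_or_ge x y with h | h
      · exact key x y h hy
      · have h' : y < x := by omega
        have := key y x h' hx
        rwa [Sym2.eq_swap] at this

lemma pathGraph3_edgeSet : (pathGraph 3).edgeSet = {s((0:Fin 3),1), s(1,2)} := by
  ext e
  induction e using Sym2.ind with
  | _ x y =>
    rw [Set.mem_insert_iff, Set.mem_singleton_iff, mem_edgeSet, pathGraph_adj, Sym2.eq_iff,
      Sym2.eq_iff]
    fin_cases x <;> fin_cases y <;> decide

lemma copy_edgeSet {B : SimpleGraph ℕ} (h : IsCopy (pathGraph 3) B) : B.edgeSet.ncard = 2 := by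
  obtain ⟨φ, hφ⟩ := h
  have him : B.edgeSet = Sym2.map φ '' (pathGraph 3).edgeSet := by
    ext e
    induction e using Sym2.ind with
    | _ x y =>
      rw [mem_edgeSet, hφ]
      constructor
      · rintro ⟨a, b, hab, rfl, rfl⟩
        exact ⟨s(a,b), hab, Sym2.map_pair_eq _ _ _⟩
      · rintro ⟨e', he', hmap⟩
        induction e' using Sym2.ind with
        | _ a b =>
          rw [Sym2.map_pair_eq, Sym2.eq_iff] at hmap
          rw [mem_edgeSet] at he'
          rcases hmap with ⟨h1, h2⟩ | ⟨h1, h2⟩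
          · exact ⟨a, b, he', h1, h2⟩
          · exact ⟨b, a, he'.symm, h2, h1⟩
  rw [him, Set.ncard_image_of_injective _ (Sym2.map.injective φ.injective), pathGraph3_edgeSet,
    Set.ncard_pair (by decide)]

lemma kon_ncard (n : ℕ) : (Kon (Set.Iio n)).edgeSet.ncard = n.choose 2 := by
  classical
  have him : (Kon (Set.Iio n)).edgeSet =
      Sym2.map (Fin.val : Fin n → ℕ) '' (⊤ : SimpleGraph (Fin n)).edgeSet := by
    ext e
    induction e using Sym2.ind with
    | _ x y =>
      rw [mem_edgeSet, kon_adj]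
      constructor
      · rintro ⟨hne, hx, hy⟩
        refine ⟨s((⟨x, hx⟩ : Fin n), (⟨y, hy⟩ : Fin n)), ?_, Sym2.map_pair_eq _ _ _⟩
        rw [mem_edgeSet, top_adj]
        exact fun h => hne (congrArg Fin.val h)
      · rintro ⟨e', he', hmap⟩
        induction e' using Sym2.ind with
        | _ a b =>
          rw [Sym2.map_pair_eq, Sym2.eq_iff] at hmap
          rw [mem_edgeSet, top_adj] at he'
          rcases hmap with ⟨h1, h2⟩ | ⟨h1, h2⟩ <;> subst h1 <;> subst h2
          · exact ⟨Fin.val_injective.ne he', a.isLt, b.isLt⟩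
          · exact ⟨Fin.val_injective.ne he'.symm, b.isLt, a.isLt⟩
  rw [him, Set.ncard_image_of_injective _ (Sym2.map.injective Fin.val_injective),
    Set.ncard_eq_toFinset_card']
  have : (⊤ : SimpleGraph (Fin n)).edgeSet.toFinset = (⊤ : SimpleGraph (Fin n)).edgeFinset := rfl
  rw [this, card_edgeFinset_top_eq_card_choose_two, Fintype.card_fin]

lemma forward {n : ℕ} (hn : 3 ≤ n) {D : Set (SimpleGraph ℕ)}
    (hD : IsDesign (Kon (Set.Iio n)) (pathGraph 3) D) : n % 4 = 0 ∨ n % 4 = 1 := by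
  classical
  obtain ⟨hD1, hD2⟩ := hD
  set G := Kon (Set.Iio n) with hG
  have hGfin : G.edgeSet.Finite := by
    have hsub : G.edgeSet ⊆ (fun p : ℕ × ℕ => s(p.1, p.2)) '' (Set.Iio n ×ˢ Set.Iio n) := by
      intro e he
      induction e using Sym2.ind with
      | _ x y =>
        rw [mem_edgeSet, kon_adj] at he
        exact ⟨(x, y), ⟨he.2.1, he.2.2⟩, rfl⟩
    exact (((Set.finite_Iio n).prod (Set.finite_Iio n)).image _).subset hsub
  have hsub : ∀ B ∈ D, B.edgeSet ⊆ G.edgeSet := fun B hB => edgeSet_subset_edgeSet.2 (hD1 B hB).1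
  let f : SimpleGraph ℕ → Sym2 ℕ := fun B => if h : B.edgeSet.Nonempty then h.some else s(0,0)
  have hfmem : ∀ B ∈ D, f B ∈ B.edgeSet := by
    intro B hB
    have h := (hD1 B hB).2.2
    simp only [f, dif_pos h]
    exact h.some_mem
  have hDfin : D.Finite := by
    refine Set.Finite.of_finite_image (f := f) (hGfin.subset ?_) ?_
    · rintro e ⟨B, hB, rfl⟩
      exact hsub B hB (hfmem B hB)
    · intro B hB B' hB' hff
      have h1 := hfmem B hB
      have h2 := hfmem B' hB'
      rw [hff] at h1
      obtain ⟨Bu, _, hu⟩ := hD2 (f B') (hsub B' hB' h2)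
      exact (hu B ⟨hB, h1⟩).trans (hu B' ⟨hB', h2⟩).symm
  have hBfin : ∀ B ∈ D, B.edgeSet.Finite := fun B hB => hGfin.subset (hsub B hB)
  let t : SimpleGraph ℕ → Finset (Sym2 ℕ) := fun B => if h : B.edgeSet.Finite then h.toFinset else ∅
  have ht : ∀ B ∈ D, ∀ e, e ∈ t B ↔ e ∈ B.edgeSet := by
    intro B hB e
    simp only [t, dif_pos (hBfin B hB), Set.Finite.mem_toFinset]
  have hcover : hGfin.toFinset = hDfin.toFinset.biUnion t := by
    ext e
    simp only [Set.Finite.mem_toFinset, Finset.mem_biUnion]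
    constructor
    · intro he
      obtain ⟨B, ⟨hB, heB⟩, _⟩ := hD2 e he
      exact ⟨B, hB, (ht B hB e).2 heB⟩
    · rintro ⟨B, hB, he⟩
      exact hsub B hB ((ht B hB e).1 he)
  have hdisj : ∀ B ∈ hDfin.toFinset, ∀ B' ∈ hDfin.toFinset, B ≠ B' → Disjoint (t B) (t B') := by
    intro B hB B' hB' hne
    rw [Set.Finite.mem_toFinset] at hB hB'
    rw [Finset.disjoint_left]
    intro e heB heB'
    rw [ht B hB e] at heB
    rw [ht B' hB' e] at heB'
    obtain ⟨Bu, _, hu⟩ := hD2 e (hsub B hB heB)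
    exact hne ((hu B ⟨hB, heB⟩).trans (hu B' ⟨hB', heB'⟩).symm)
  have ht2 : ∀ B ∈ hDfin.toFinset, (t B).card = 2 := by
    intro B hB
    rw [Set.Finite.mem_toFinset] at hB
    have h2 := copy_edgeSet (hD1 B hB).2.1
    rw [Set.ncard_eq_toFinset_card _ (hBfin B hB)] at h2
    simpa only [t, dif_pos (hBfin B hB)] using h2
  have htot : n.choose 2 = 2 * hDfin.toFinset.card := by
    have h1 : n.choose 2 = hGfin.toFinset.card := by
      rw [← kon_ncard n]
      exact Set.ncard_eq_toFinset_card _ hGfin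
    rw [h1, hcover, Finset.card_biUnion hdisj, Finset.sum_congr rfl ht2, Finset.sum_const,
      smul_eq_mul, Nat.mul_comm]
  -- arithmetic
  have hdvd : 2 ∣ n * (n - 1) := by
    have : 2 ∣ n ∨ 2 ∣ (n - 1) := by omega
    rcases this with h | h
    · exact Dvd.dvd.mul_right h _
    · exact Dvd.dvd.mul_left h _
  have hch : n * (n - 1) = 4 * hDfin.toFinset.card := by
    have := Nat.choose_two_right n
    omega
  have h1 : n * (n - 1) % 4 = 0 := by rw [hch]; exact Nat.mul_mod_right 4 _
  rw [Nat.mul_mod] at h1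
  by_contra hcon
  push_neg at hcon
  have h23 : n % 4 = 2 ∨ n % 4 = 3 := by omega
  have hs : (n - 1) % 4 = (n % 4 + 3) % 4 := by omega
  rcases h23 with h | h <;> rw [h] at h1 hs <;> norm_num at hs <;> rw [hs] at h1 <;>
    norm_num at h1

lemma base4 : IsDesign (Kon (Set.Iio 4)) (pathGraph 3) {Pth 1 0 2, Pth 3 1 2, Pth 2 3 0} := by
  constructor
  · intro B hB
    simp only [Set.mem_insert_iff, Set.mem_singleton_iff] at hB
    rcases hB with rfl | rfl | rfl <;>
      exact ⟨pth_le (by omega) (by omega) (by omega) (by omega) (by omega),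
        isCopy_pth (by omega) (by omega) (by omega), pth_nonempty (by omega) (by omega)⟩
  · intro e he
    induction e using Sym2.ind with
    | _ x y =>
      rw [mem_edgeSet, kon_adj] at he
      obtain ⟨hne, hx, hy⟩ := he
      simp only [Set.mem_Iio] at hx hy
      have huniq : ∀ T : SimpleGraph ℕ, True := fun _ => trivial
      interval_cases x <;> interval_cases y <;> (try omega) <;>
        (first
          | refine ⟨Pth 1 0 2, ⟨by simp, by
              rw [pth_edgeSet (by omega) (by omega)]
              simp only [Set.mem_insert_iff, Set.mem_singleton_iff, Sym2.eq_iff]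
              decide⟩, ?_⟩
          | refine ⟨Pth 3 1 2, ⟨by simp, by
              rw [pth_edgeSet (by omega) (by omega)]
              simp only [Set.mem_insert_iff, Set.mem_singleton_iff, Sym2.eq_iff]
              decide⟩, ?_⟩
          | refine ⟨Pth 2 3 0, ⟨by simp, by
              rw [pth_edgeSet (by omega) (by omega)]
              simp only [Set.mem_insert_iff, Set.mem_singleton_iff, Sym2.eq_iff]
              decide⟩, ?_⟩) <;>
        (rintro B' ⟨hB', he'⟩
         simp only [Set.mem_insert_iff, Set.mem_singleton_iff] at hB'
         rcases hB' with rfl | rfl | rfl <;>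
           rw [pth_edgeSet (by omega) (by omega)] at he' <;>
           simp only [Set.mem_insert_iff, Set.mem_singleton_iff, Sym2.eq_iff] at he' <;>
           first | rfl | exact absurd he' (by decide))

lemma base5 : IsDesign (Kon (Set.Iio 5)) (pathGraph 3)
    {Pth 1 0 2, Pth 3 0 4, Pth 2 1 3, Pth 4 2 3, Pth 3 4 1} := by
  constructor
  · intro B hB
    simp only [Set.mem_insert_iff, Set.mem_singleton_iff] at hB
    rcases hB with rfl | rfl | rfl | rfl | rfl <;>
      exact ⟨pth_le (by omega) (by omega) (by omega) (by omega) (by omega),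
        isCopy_pth (by omega) (by omega) (by omega), pth_nonempty (by omega) (by omega)⟩
  · intro e he
    induction e using Sym2.ind with
    | _ x y =>
      rw [mem_edgeSet, kon_adj] at he
      obtain ⟨hne, hx, hy⟩ := he
      simp only [Set.mem_Iio] at hx hy
      interval_cases x <;> interval_cases y <;> (try omega) <;>
        (first
          | refine ⟨Pth 1 0 2, ⟨by simp, by
              rw [pth_edgeSet (by omega) (by omega)]
              simp only [Set.mem_insert_iff, Set.mem_singleton_iff, Sym2.eq_iff]
              decide⟩, ?_⟩
          | refine ⟨Pth 3 0 4, ⟨by simp, by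
              rw [pth_edgeSet (by omega) (by omega)]
              simp only [Set.mem_insert_iff, Set.mem_singleton_iff, Sym2.eq_iff]
              decide⟩, ?_⟩
          | refine ⟨Pth 2 1 3, ⟨by simp, by
              rw [pth_edgeSet (by omega) (by omega)]
              simp only [Set.mem_insert_iff, Set.mem_singleton_iff, Sym2.eq_iff]
              decide⟩, ?_⟩
          | refine ⟨Pth 4 2 3, ⟨by simp, by
              rw [pth_edgeSet (by omega) (by omega)]
              simp only [Set.mem_insert_iff, Set.mem_singleton_iff, Sym2.eq_iff]
              decide⟩, ?_⟩
          | refine ⟨Pth 3 4 1, ⟨by simp, by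
              rw [pth_edgeSet (by omega) (by omega)]
              simp only [Set.mem_insert_iff, Set.mem_singleton_iff, Sym2.eq_iff]
              decide⟩, ?_⟩) <;>
        (rintro B' ⟨hB', he'⟩
         simp only [Set.mem_insert_iff, Set.mem_singleton_iff] at hB'
         rcases hB' with rfl | rfl | rfl | rfl | rfl <;>
           rw [pth_edgeSet (by omega) (by omega)] at he' <;>
           simp only [Set.mem_insert_iff, Set.mem_singleton_iff, Sym2.eq_iff] at he' <;>
           first | rfl | exact absurd he' (by decide))

lemma exists_design : ∀ k : ℕ, (∃ D, IsDesign (Kon (Set.Iio (4 + 4*k))) (pathGraph 3) D) ∧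
    (∃ D, IsDesign (Kon (Set.Iio (5 + 4*k))) (pathGraph 3) D) := by
  intro k
  induction k with
  | zero => exact ⟨⟨_, base4⟩, ⟨_, base5⟩⟩
  | succ k ih =>
    obtain ⟨⟨D0, h0⟩, ⟨D1, h1⟩⟩ := ih
    constructor
    · have h : 4 + 4*(k+1) = (4 + 4*k) + 4 := by ring
      rw [h]; exact ⟨_, step h0⟩
    · have h : 5 + 4*(k+1) = (5 + 4*k) + 4 := by ring
      rw [h]; exact ⟨_, step h1⟩

/-- A `(K_n, P₃)`-design exists iff `n ≡ 0, 1 (mod 4)`. -/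
theorem stmt2 (n : ℕ) (hn : 3 ≤ n) :
    (∃ D : Set (SimpleGraph ℕ), IsDesign (Kon (Set.Iio n)) (pathGraph 3) D) ↔
      n % 4 = 0 ∨ n % 4 = 1 := by
  constructor
  · rintro ⟨D, hD⟩
    exact forward hn hD
  · rintro (h | h)
    · obtain ⟨k, rfl⟩ : ∃ k, n = 4 + 4*k := ⟨n/4 - 1, by omega⟩
      exact (exists_design k).1
    · obtain ⟨k, rfl⟩ : ∃ k, n = 5 + 4*k := ⟨n/4 - 1, by omega⟩
      exact (exists_design k).2
end

section
/- For any (K_v,Γ)-design B with P₃ ≤ Γ, there exists w with 0 ≤ w ≤ 3 such that B can be down-linked to a (K_{v+w},P₃)-design; in particular η₂(v) ≤ v+3. -/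
open SimpleGraph

/-- min endpoint of an edge -/
def emin (e : Sym2 ℕ) : ℕ := Sym2.lift ⟨min, min_comm⟩ e
/-- max endpoint of an edge -/
def emax (e : Sym2 ℕ) : ℕ := Sym2.lift ⟨max, max_comm⟩ e

@[simp] lemma emin_mk (a b : ℕ) : emin s(a,b) = min a b := rfl
@[simp] lemma emax_mk (a b : ℕ) : emax s(a,b) = max a b := rfl

lemma emin_mem (e : Sym2 ℕ) : emin e ∈ e := by
  induction e using Sym2.ind with
  | _ a b => rw [emin_mk, Sym2.mem_iff]; exact min_choice a b

lemma emax_mem (e : Sym2 ℕ) : emax e ∈ e := by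
  induction e using Sym2.ind with
  | _ a b => rw [emax_mk, Sym2.mem_iff]; exact max_choice a b

/-- the endpoint other than `u` (for edges containing `u`) -/
def ept (u : ℕ) (e : Sym2 ℕ) : ℕ := if emin e = u then emax e else emin e

lemma ept_mem (u : ℕ) (e : Sym2 ℕ) : ept u e ∈ e := by
  unfold ept; split
  · exact emax_mem e
  · exact emin_mem e

lemma ept_mk (u x : ℕ) (h : x ≠ u) : ept u s(u,x) = x := by
  unfold ept
  rcases le_total u x with h1 | h1
  · rw [emin_mk, emax_mk, min_eq_left h1, max_eq_right h1, if_pos rfl]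
  · rw [emin_mk, emax_mk, min_eq_right h1, if_neg h]

lemma ept_spec (u : ℕ) (e : Sym2 ℕ) (hd : ¬ e.IsDiag) (hu : u ∈ e) :
    ept u e ≠ u ∧ e = s(u, ept u e) := by
  induction e using Sym2.ind with
  | _ a b =>
    rw [Sym2.mk_isDiag_iff] at hd
    rw [Sym2.mem_iff] at hu
    rcases hu with rfl | rfl
    · have hb : b ≠ u := fun h => hd h.symm
      rw [ept_mk u b hb]; exact ⟨hb, rfl⟩
    · have ha : a ≠ u := hd
      rw [Sym2.eq_swap, ept_mk u a ha]; exact ⟨ha, rfl⟩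

/-- Edge set of the complete graph on `{0,...,n-1}` as a finset. -/
def EF (n : ℕ) : Finset (Sym2 ℕ) := (Finset.range n).sym2.filter (fun e => ¬ e.IsDiag)

lemma mem_EF {n a b : ℕ} : s(a,b) ∈ EF n ↔ a < n ∧ b < n ∧ a ≠ b := by
  unfold EF
  rw [Finset.mem_filter, Finset.mk_mem_sym2_iff, Sym2.mk_isDiag_iff]
  simp only [Finset.mem_range]
  tauto

lemma EF_not_isDiag {n : ℕ} {e : Sym2 ℕ} (h : e ∈ EF n) : ¬ e.IsDiag :=
  (Finset.mem_filter.1 h).2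

lemma EF_lt {n : ℕ} {e : Sym2 ℕ} (h : e ∈ EF n) {x : ℕ} (hx : x ∈ e) : x < n := by
  induction e using Sym2.ind with
  | _ a b =>
    rw [mem_EF] at h
    rw [Sym2.mem_iff] at hx
    rcases hx with rfl | rfl
    · exact h.1
    · exact h.2.1

lemma edgeSet_Kon (n : ℕ) : (Kon (Set.Iio n)).edgeSet = ↑(EF n) := by
  ext e
  induction e using Sym2.ind with
  | _ a b =>
    rw [SimpleGraph.mem_edgeSet, Finset.mem_coe, mem_EF]
    show (a ≠ b ∧ a ∈ Set.Iio n ∧ b ∈ Set.Iio n) ↔ _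
    simp only [Set.mem_Iio]
    tauto

lemma EF_succ (n : ℕ) :
    EF (n+1) = EF n ∪ (Finset.range n).image (fun x => s(x, n)) := by
  ext e
  induction e using Sym2.ind with
  | _ a b =>
    rw [Finset.mem_union, mem_EF, mem_EF, Finset.mem_image]
    constructor
    · rintro ⟨ha, hb, hab⟩
      rcases Nat.lt_succ_iff_lt_or_eq.1 ha with ha' | rfl
      · rcases Nat.lt_succ_iff_lt_or_eq.1 hb with hb' | rfl
        · exact Or.inl ⟨ha', hb', hab⟩
        · exact Or.inr ⟨a, Finset.mem_range.2 ha', rfl⟩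
      · rcases Nat.lt_succ_iff_lt_or_eq.1 hb with hb' | rfl
        · exact Or.inr ⟨b, Finset.mem_range.2 hb', Sym2.eq_swap⟩
        · exact absurd rfl hab
    · rintro (⟨ha, hb, hab⟩ | ⟨x, hx, hxe⟩)
      · exact ⟨ha.trans (Nat.lt_succ_self n), hb.trans (Nat.lt_succ_self n), hab⟩
      · rw [Finset.mem_range] at hx
        rw [Sym2.eq_iff] at hxe
        rcases hxe with ⟨rfl, rfl⟩ | ⟨rfl, rfl⟩
        · exact ⟨hx.trans (Nat.lt_succ_self n), Nat.lt_succ_self n, Nat.ne_of_lt hx⟩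
        · exact ⟨Nat.lt_succ_self n, hx.trans (Nat.lt_succ_self n), (Nat.ne_of_lt hx).symm⟩

lemma card_EF (n : ℕ) : 2 * (EF n).card = n * (n - 1) := by
  induction n with
  | zero => rfl
  | succ n ih =>
    have hdisj : Disjoint (EF n) ((Finset.range n).image (fun x => s(x, n))) := by
      rw [Finset.disjoint_right]
      rintro e he heEF
      rw [Finset.mem_image] at he
      obtain ⟨x, hx, rfl⟩ := he
      have := EF_lt heEF (Sym2.mem_mk_right x n)
      omega
    have hinj : Set.InjOn (fun x => s(x, n)) (Finset.range n) := by
      intro x hx y hy hxy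
      simp only [Sym2.eq_iff] at hxy
      rcases hxy with ⟨rfl, _⟩ | ⟨rfl, rfl⟩ <;> rfl
    have hcard : (EF (n+1)).card = (EF n).card + n := by
      rw [EF_succ, Finset.card_union_of_disjoint hdisj, Finset.card_image_of_injOn hinj,
        Finset.card_range]
    rw [hcard, Nat.mul_add, ih]
    cases n with
    | zero => rfl
    | succ m => simp only [Nat.succ_sub_one]; ring

lemma even_card_EF {n : ℕ} (h : n % 4 = 0 ∨ n % 4 = 1) : Even (EF n).card := by
  have hc := card_EF n
  rcases h with h | h
  · obtain ⟨k, rfl⟩ : ∃ k, n = 4 * k := ⟨n / 4, by omega⟩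
    have h2 : 4 * k * (4 * k - 1) = 2 * (2 * (k * (4 * k - 1))) := by ring
    rw [h2] at hc
    have : (EF (4 * k)).card = 2 * (k * (4 * k - 1)) := by omega
    exact ⟨k * (4 * k - 1), by omega⟩
  · obtain ⟨k, rfl⟩ : ∃ k, n = 4 * k + 1 := ⟨n / 4, by omega⟩
    have h2 : (4 * k + 1) * (4 * k + 1 - 1) = 2 * (2 * (k * (4 * k + 1))) := by
      simp only [Nat.add_sub_cancel]; ring
    rw [h2] at hc
    exact ⟨k * (4 * k + 1), by omega⟩

lemma exists_invol {β : Type*} :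
    ∀ (s : Finset β), Even s.card →
      ∃ i : β → β, ∀ e ∈ s, i e ∈ s ∧ i e ≠ e ∧ i (i e) = e := by
  classical
  intro s
  induction s using Finset.strongInduction with
  | _ s ih =>
    intro hev
    rcases Finset.eq_empty_or_nonempty s with rfl | ⟨a, ha⟩
    · exact ⟨id, by simp⟩
    · have hcard : 2 ≤ s.card := by
        rcases hev with ⟨r, hr⟩
        have : 0 < s.card := Finset.card_pos.2 ⟨a, ha⟩
        omega
    
      have hpos : 0 < (s.erase a).card := by
        rw [Finset.card_erase_of_mem ha]; omega
      obtain ⟨b, hb⟩ := Finset.card_pos.1 hpos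
      have hba : b ≠ a := Finset.ne_of_mem_erase hb
      have hbs : b ∈ s := Finset.mem_of_mem_erase hb
      set t := (s.erase a).erase b with ht
      have hts : t ⊂ s :=
        Finset.ssubset_of_subset_of_ssubset (Finset.erase_subset _ _) (Finset.erase_ssubset ha)
      have htcard : Even t.card := by
        have h1 : t.card = s.card - 2 := by
          rw [ht, Finset.card_erase_of_mem hb, Finset.card_erase_of_mem ha]; omega
        rcases hev with ⟨r, hr⟩
        exact ⟨r - 1, by omega⟩
      obtain ⟨i0, hi0⟩ := ih t hts htcard
      refine ⟨fun x => if x = a then b else if x = b then a else i0 x, ?_⟩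
      intro e he
      dsimp only
      by_cases hea : e = a
      · subst hea
        simp [hba, hba.symm, hbs]
      · by_cases heb : e = b
        · subst heb
          simp [hea, hba, Ne.symm hba, ha]
        · have het : e ∈ t := by
            rw [ht]; exact Finset.mem_erase.2 ⟨heb, Finset.mem_erase.2 ⟨hea, he⟩⟩
          obtain ⟨h1, h2, h3⟩ := hi0 e het
          have h1b : i0 e ≠ b := by rw [ht] at h1; exact Finset.ne_of_mem_erase h1
          have h1a : i0 e ≠ a := by
            rw [ht] at h1
            exact Finset.ne_of_mem_erase (Finset.mem_of_mem_erase h1)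
          have h1s : i0 e ∈ s := by
            rw [ht] at h1
            exact Finset.mem_of_mem_erase (Finset.mem_of_mem_erase h1)
          simp [hea, heb, h1a, h1b, h1s, h2, h3]

lemma even_of_invol {β : Type*} :
    ∀ (s : Finset β) (i : β → β),
      (∀ e ∈ s, i e ∈ s ∧ i e ≠ e ∧ i (i e) = e) → Even s.card := by
  classical
  intro s
  induction s using Finset.strongInduction with
  | _ s ih =>
    intro i hi
    rcases Finset.eq_empty_or_nonempty s with rfl | ⟨a, ha⟩
    · simp
    · obtain ⟨hb, hba, hbb⟩ := hi a ha
      set b := i a with hbdef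
      set t := (s.erase a).erase b with ht
      have hts : t ⊂ s :=
        Finset.ssubset_of_subset_of_ssubset (Finset.erase_subset _ _) (Finset.erase_ssubset ha)
      have hrestrict : ∀ e ∈ t, i e ∈ t ∧ i e ≠ e ∧ i (i e) = e := by
        intro e het
        have hes : e ∈ s := Finset.mem_of_mem_erase (Finset.mem_of_mem_erase het)
        obtain ⟨h1, h2, h3⟩ := hi e hes
        have heb : e ≠ b := Finset.ne_of_mem_erase het
        have hea : e ≠ a := Finset.ne_of_mem_erase (Finset.mem_of_mem_erase het)
        refine ⟨Finset.mem_erase.2 ⟨?_, Finset.mem_erase.2 ⟨?_, h1⟩⟩, h2, h3⟩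
        · intro h; rw [h, hbb] at h3; exact hea h3.symm
        · intro h; rw [h] at h3; rw [← hbdef] at h3; exact heb h3.symm
      have hteven := ih t hts i hrestrict
      have hbea : b ∈ s.erase a := Finset.mem_erase.2 ⟨hba, hb⟩
      have hcard : s.card = t.card + 2 := by
        have h1 : 0 < (s.erase a).card := Finset.card_pos.2 ⟨b, hbea⟩
        have h2 : 0 < s.card := Finset.card_pos.2 ⟨a, ha⟩
        rw [ht, Finset.card_erase_of_mem hbea, Finset.card_erase_of_mem ha]
        rw [Finset.card_erase_of_mem ha] at h1
        omega
      rcases hteven with ⟨r, hr⟩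
      exact ⟨r + 1, by omega⟩

lemma key (n u : ℕ) (hun : u < n) (hn4 : n % 4 = 0 ∨ n % 4 = 1)
    (P : Sym2 ℕ → Prop) (pr0 : Sym2 ℕ → Sym2 ℕ) (c0 : Sym2 ℕ → ℕ)
    (h1 : ∀ e, P e → e ∈ EF n ∧ P (pr0 e) ∧ pr0 e ≠ e ∧ pr0 (pr0 e) = e ∧
          c0 e ∈ e ∧ c0 e ∈ pr0 e ∧ u ∉ e) :
    ∃ (Pr : Sym2 ℕ → Sym2 ℕ) (ctr : Sym2 ℕ → ℕ),
      (∀ e, P e → Pr e = pr0 e ∧ ctr e = c0 e) ∧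
      ∀ e ∈ EF n, Pr e ∈ EF n ∧ Pr e ≠ e ∧ Pr (Pr e) = e ∧ ctr e ∈ e ∧ ctr e ∈ Pr e := by
  classical
  set L : Finset (Sym2 ℕ) := (EF n).filter (fun e => ¬ P e) with hL
  have hLmem : ∀ e, e ∈ L ↔ e ∈ EF n ∧ ¬ P e := fun e => Finset.mem_filter
  have hCov : Even ((EF n).filter P).card := by
    apply even_of_invol _ pr0
    intro e he
    rw [Finset.mem_filter] at he
    obtain ⟨h1', h2', h3', h4', _, _, _⟩ := h1 e he.2
    exact ⟨Finset.mem_filter.2 ⟨(h1 _ h2').1, h2'⟩, h3', h4'⟩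
  have hEF : Even (EF n).card := even_card_EF hn4
  have hLeven : Even L.card := by
    have hsplit : ((EF n).filter P).card + L.card = (EF n).card :=
      Finset.card_filter_add_card_filter_not (s := EF n) (p := P)
    rw [Nat.even_iff] at hEF hCov ⊢
    omega
  set cnt : ℕ → ℕ := fun x => (L.filter (fun e => u ∉ e ∧ emin e = x)).card with hcnt
  set g : Sym2 ℕ → ℕ :=
    fun e => if u ∈ e then (if Odd (cnt (ept u e)) then ept u e else u) else emin e with hg
  have hgdef1 : ∀ e, u ∈ e → g e = if Odd (cnt (ept u e)) then ept u e else u :=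
    fun e h => if_pos h
  have hgdef2 : ∀ e, u ∉ e → g e = emin e := fun e h => if_neg h
  set A : ℕ → Finset (Sym2 ℕ) := fun x => L.filter (fun e => g e = x) with hA
  have hAmem : ∀ x e, e ∈ A x ↔ e ∈ L ∧ g e = x := fun x e => Finset.mem_filter
  have hgmem : ∀ e ∈ L, g e ∈ e := by
    intro e heL
    by_cases hue : u ∈ e
    · rw [hgdef1 e hue]
      split
      · exact ept_mem u e
      · exact hue
    · rw [hgdef2 e hue]
      exact emin_mem e
  have hstar : ∀ x, x < n → x ≠ u → s(u,x) ∈ L := by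
    intro x hxn hxu
    rw [hLmem]
    constructor
    · rw [mem_EF]; exact ⟨hun, hxn, fun h => hxu h.symm⟩
    · intro hP
      exact (h1 _ hP).2.2.2.2.2.2 (Sym2.mem_mk_left u x)
  have hAx : ∀ x, x ≠ u → Even (A x).card := by
    intro x hxu
    have hsplit : ((A x).filter (fun e => u ∈ e)).card
        + ((A x).filter (fun e => ¬ u ∈ e)).card = (A x).card :=
      Finset.card_filter_add_card_filter_not (s := A x) (p := fun e => u ∈ e)
    have hpart2 : (A x).filter (fun e => ¬ u ∈ e) = L.filter (fun e => u ∉ e ∧ emin e = x) := by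
      ext e
      simp only [Finset.mem_filter, hAmem]
      constructor
      · rintro ⟨⟨heL, hge⟩, hue⟩
        rw [hgdef2 e hue] at hge
        exact ⟨heL, hue, hge⟩
      · rintro ⟨heL, hue, hemin⟩
        exact ⟨⟨heL, by rw [hgdef2 e hue]; exact hemin⟩, hue⟩
    have hpart1 : (A x).filter (fun e => u ∈ e) =
        if Odd (cnt x) then {s(u,x)} else ∅ := by
      ext e
      rw [Finset.mem_filter, hAmem]
      constructor
      · rintro ⟨⟨heL, hge⟩, hue⟩
        have hnd : ¬ e.IsDiag := EF_not_isDiag ((hLmem e).1 heL).1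
        obtain ⟨hept, heq⟩ := ept_spec u e hnd hue
        rw [hgdef1 e hue] at hge
        by_cases hodd : Odd (cnt (ept u e))
        · rw [if_pos hodd] at hge
          subst hge
          rw [if_pos hodd, Finset.mem_singleton]
          exact heq
        · rw [if_neg hodd] at hge
          exact absurd hge.symm hxu
      · intro he
        by_cases hodd : Odd (cnt x)
        · rw [if_pos hodd, Finset.mem_singleton] at he
          subst he
          have hxn : x < n := by
            have hcnt0 : cnt x ≠ 0 := by
              intro h
              rw [h, Nat.odd_iff] at hodd
              omega
            obtain ⟨e', he'⟩ := Finset.card_pos.1 (Nat.pos_of_ne_zero hcnt0)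
            rw [Finset.mem_filter] at he'
            have : x ∈ e' := he'.2.2 ▸ emin_mem e'
            exact EF_lt ((hLmem e').1 he'.1).1 this
          have heL : s(u,x) ∈ L := hstar x hxn hxu
          refine ⟨⟨heL, ?_⟩, Sym2.mem_mk_left u x⟩
          rw [hgdef1 _ (Sym2.mem_mk_left u x), ept_mk u x hxu]
          exact if_pos hodd
        · rw [if_neg hodd] at he
          exact absurd he (Finset.notMem_empty e)
    have hc2 : ((A x).filter (fun e => ¬ u ∈ e)).card = cnt x := by rw [hpart2]
    rcases Nat.even_or_odd (cnt x) with hev | hodd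
    · have hc1 : ((A x).filter (fun e => u ∈ e)).card = 0 := by
        rw [hpart1, if_neg (by rwa [Nat.not_odd_iff_even]), Finset.card_empty]
      rw [Nat.even_iff] at hev ⊢
      omega
    · have hc1 : ((A x).filter (fun e => u ∈ e)).card = 1 := by
        rw [hpart1, if_pos hodd, Finset.card_singleton]
      rw [Nat.odd_iff] at hodd
      rw [Nat.even_iff]
      omega
  have hAeven : ∀ x, Even (A x).card := by
    intro x
    by_cases hxu : x = u
    · rw [hxu]
      by_cases hu : u ∈ L.image g
      · have hsum : L.card = ∑ y ∈ L.image g, (A y).card :=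
          Finset.card_eq_sum_card_fiberwise (fun e he => Finset.mem_image_of_mem g he)
        have herase : (A u).card + ∑ y ∈ (L.image g).erase u, (A y).card
            = ∑ y ∈ L.image g, (A y).card :=
          Finset.add_sum_erase (L.image g) (fun y => (A y).card) hu
        have hdvd : 2 ∣ ∑ y ∈ (L.image g).erase u, (A y).card := by
          apply Finset.dvd_sum
          intro y hy
          exact (hAx y (Finset.ne_of_mem_erase hy)).two_dvd
        rw [Nat.even_iff] at hLeven ⊢
        omega
      · have hAu : A u = ∅ := by
          rw [Finset.filter_eq_empty_iff]
          intro e he hge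
          exact hu (hge ▸ Finset.mem_image_of_mem g he)
        rw [hAu]
        simp
    · exact hAx x hxu
  choose I hI using fun x => exists_invol (A x) (hAeven x)
  refine ⟨fun e => if P e then pr0 e else I (g e) e,
          fun e => if P e then c0 e else g e, ?_, ?_⟩
  · intro e he
    dsimp only
    rw [if_pos he, if_pos he]
    exact ⟨rfl, rfl⟩
  · intro e heEF
    dsimp only
    by_cases hPe : P e
    · obtain ⟨_, hP2, hne, hpp, hc1, hc2, _⟩ := h1 e hPe
      rw [if_pos hPe, if_pos hPe, if_pos hP2]
      exact ⟨(h1 _ hP2).1, hne, hpp, hc1, hc2⟩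
    · have heL : e ∈ L := (hLmem e).2 ⟨heEF, hPe⟩
      have heA : e ∈ A (g e) := (hAmem _ e).2 ⟨heL, rfl⟩
      obtain ⟨hmem, hne, hii⟩ := hI (g e) e heA
      have hmemL : I (g e) e ∈ L := ((hAmem _ _).1 hmem).1
      have hgeq : g (I (g e) e) = g e := ((hAmem _ _).1 hmem).2
      have hnP : ¬ P (I (g e) e) := ((hLmem _).1 hmemL).2
      rw [if_neg hPe, if_neg hPe, if_neg hnP, hgeq]
      refine ⟨((hLmem _).1 hmemL).1, hne, hii, hgmem e heL, ?_⟩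
      have := hgmem _ hmemL
      rwa [hgeq] at this


lemma isCopy_aux (c a b : ℕ) (hca : c ≠ a) (hcb : c ≠ b) (hab : a ≠ b) :
    IsCopy (pathGraph 3) (SimpleGraph.fromEdgeSet {s(c,a), s(c,b)}) := by
  have hinj : Function.Injective ![a, c, b] := by
    intro i j hij
    fin_cases i <;> fin_cases j <;> revert hij <;>
      simp [hca, hcb, hab, Ne.symm hca, Ne.symm hcb, Ne.symm hab]
  refine ⟨⟨![a, c, b], hinj⟩, ?_⟩
  have h01 : (pathGraph 3).Adj 0 1 := by rw [pathGraph_adj]; decide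
  have h10 : (pathGraph 3).Adj 1 0 := by rw [pathGraph_adj]; decide
  have h12 : (pathGraph 3).Adj 1 2 := by rw [pathGraph_adj]; decide
  have h21 : (pathGraph 3).Adj 2 1 := by rw [pathGraph_adj]; decide
  intro x y
  rw [SimpleGraph.fromEdgeSet_adj]
  constructor
  · rintro ⟨hm, hxy⟩
    rw [Set.mem_insert_iff, Set.mem_singleton_iff] at hm
    rcases hm with hm | hm <;> rw [Sym2.eq_iff] at hm <;>
      rcases hm with ⟨rfl, rfl⟩ | ⟨rfl, rfl⟩
    · exact ⟨1, 0, h10, rfl, rfl⟩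
    · exact ⟨0, 1, h01, rfl, rfl⟩
    · exact ⟨1, 2, h12, rfl, rfl⟩
    · exact ⟨2, 1, h21, rfl, rfl⟩
  · rintro ⟨i, j, hadj, rfl, rfl⟩
    rw [pathGraph_adj] at hadj
    fin_cases i <;> fin_cases j <;> simp only [Matrix.cons_val_zero, Matrix.cons_val_one,
      Matrix.head_cons, Matrix.cons_val_two, Matrix.tail_cons] <;>
      first
        | (exact absurd hadj (by decide))
        | (refine ⟨?_, ?_⟩)
    · exact Or.inl Sym2.eq_swap
    · exact fun h => hca h.symm
    · exact Or.inl rfl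
    · exact hca
    · exact Or.inr rfl
    · exact hcb
    · exact Or.inr Sym2.eq_swap
    · exact fun h => hcb h.symm


/-- Any `(K_v,Γ)`-design with `P₃ ≤ Γ` can be down-linked to a
`(K_{v+w},P₃)`-design for some `0 ≤ w ≤ 3`; in particular `η₂(v) ≤ v + 3`. -/
theorem stmt5 {α : Type*} (Γ : SimpleGraph α)
    (hP : ∃ φ : Fin 3 ↪ α, ∀ a b, (pathGraph 3).Adj a b → Γ.Adj (φ a) (φ b))
    (v : ℕ) (D : Set (SimpleGraph ℕ)) (hD : IsDesign (Kon (Set.Iio v)) Γ D) :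
    ∃ w ≤ 3, ∃ D' : Set (SimpleGraph ℕ),
      IsDesign (Kon (Set.Iio (v + w))) (pathGraph 3) D' ∧
      ∃ f, IsDownlink D D' f := by
  classical
  obtain ⟨ψ, hψ⟩ := hP
  set w : ℕ := if v % 4 = 0 then 1 else if v % 4 = 1 then 3 else if v % 4 = 2 then 2 else 1
    with hwdef
  have hw3 : w ≤ 3 := by rw [hwdef]; split_ifs <;> omega
  set n := v + w with hn
  have hn4 : n % 4 = 0 ∨ n % 4 = 1 := by
    rw [hn, hwdef]; split_ifs <;> omega
  have hun : v < n := by rw [hn, hwdef]; split_ifs <;> omega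
  -- choose a path in each block
  have h01 : (pathGraph 3).Adj 0 1 := by rw [pathGraph_adj]; decide
  have h12 : (pathGraph 3).Adj 1 2 := by rw [pathGraph_adj]; decide
  have hpick : ∀ B ∈ D, ∃ p : ℕ × ℕ × ℕ,
      B.Adj p.1 p.2.1 ∧ B.Adj p.2.1 p.2.2 ∧ p.1 ≠ p.2.2 := by
    intro B hB
    obtain ⟨φ, hφ⟩ := (hD.1 B hB).2.1
    refine ⟨⟨φ (ψ 0), φ (ψ 1), φ (ψ 2)⟩, ?_, ?_, ?_⟩
    · exact (hφ _ _).2 ⟨ψ 0, ψ 1, hψ _ _ h01, rfl, rfl⟩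
    · exact (hφ _ _).2 ⟨ψ 1, ψ 2, hψ _ _ h12, rfl, rfl⟩
    · exact fun h => (by decide : (0 : Fin 3) ≠ 2) (ψ.injective (φ.injective h))
  choose t ht1 ht2 ht3 using hpick
  set tB : SimpleGraph ℕ → ℕ × ℕ × ℕ := fun B => if hB : B ∈ D then t B hB else 0 with htB
  have htB1 : ∀ B (hB : B ∈ D), B.Adj (tB B).1 (tB B).2.1 := by
    intro B hB; rw [htB]; dsimp only; rw [dif_pos hB]; exact ht1 B hB
  have htB2 : ∀ B (hB : B ∈ D), B.Adj (tB B).2.1 (tB B).2.2 := by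
    intro B hB; rw [htB]; dsimp only; rw [dif_pos hB]; exact ht2 B hB
  have htB3 : ∀ B (hB : B ∈ D), (tB B).1 ≠ (tB B).2.2 := by
    intro B hB; rw [htB]; dsimp only; rw [dif_pos hB]; exact ht3 B hB
  set E1 : SimpleGraph ℕ → Sym2 ℕ := fun B => s((tB B).1, (tB B).2.1) with hE1
  set E2 : SimpleGraph ℕ → Sym2 ℕ := fun B => s((tB B).2.1, (tB B).2.2) with hE2
  have hE1mem : ∀ B (hB : B ∈ D), E1 B ∈ B.edgeSet := fun B hB => htB1 B hB
  have hE2mem : ∀ B (hB : B ∈ D), E2 B ∈ B.edgeSet := fun B hB => htB2 B hB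
  have hE12 : ∀ B (hB : B ∈ D), E1 B ≠ E2 B := by
    intro B hB h
    rw [hE1, hE2] at h
    rw [Sym2.eq_iff] at h
    rcases h with ⟨h1, h2⟩ | ⟨h1, h2⟩
    · exact htB3 B hB (h1.trans h2)
    · exact htB3 B hB h1
  -- edges of blocks are in EF n and avoid v
  have hBE : ∀ B, B ∈ D → ∀ e ∈ B.edgeSet, e ∈ EF n ∧ v ∉ e := by
    intro B hB e heB
    have hle : B ≤ Kon (Set.Iio v) := (hD.1 B hB).1
    have heKv : e ∈ (Kon (Set.Iio v)).edgeSet := SimpleGraph.edgeSet_mono hle heB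
    induction e using Sym2.ind with
    | _ a b =>
      rw [SimpleGraph.mem_edgeSet] at heKv
      obtain ⟨hab, ha, hb⟩ := heKv
      rw [Set.mem_Iio] at ha hb
      constructor
      · rw [mem_EF]; exact ⟨ha.trans hun, hb.trans hun, hab⟩
      · rw [Sym2.mem_iff]
        rintro (rfl | rfl) <;> omega
  -- uniqueness of blocks
  have huniq : ∀ B, B ∈ D → ∀ B', B' ∈ D → ∀ e, e ∈ B.edgeSet → e ∈ B'.edgeSet → B = B' := by
    intro B hB B' hB' e heB heB'
    have heKv : e ∈ (Kon (Set.Iio v)).edgeSet :=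
      SimpleGraph.edgeSet_mono (hD.1 B hB).1 heB
    obtain ⟨Bu, _, hu⟩ := hD.2 e heKv
    rw [hu B ⟨hB, heB⟩, hu B' ⟨hB', heB'⟩]
  set cov : Sym2 ℕ → Prop := fun e => ∃ B, B ∈ D ∧ (e = E1 B ∨ e = E2 B) with hcov
  set blk : Sym2 ℕ → SimpleGraph ℕ := fun e => if h : cov e then h.choose else ⊥ with hblkdef
  have hblk0 : ∀ e, cov e → blk e ∈ D ∧ (e = E1 (blk e) ∨ e = E2 (blk e)) := by
    intro e h
    rw [hblkdef]; dsimp only; rw [dif_pos h]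
    exact ⟨h.choose_spec.1, h.choose_spec.2⟩
  have hmemblk : ∀ e, cov e → e ∈ (blk e).edgeSet := by
    intro e h
    obtain ⟨hD1, hcase⟩ := hblk0 e h
    rcases hcase with he | he
    · exact Set.mem_of_eq_of_mem he (hE1mem _ hD1)
    · exact Set.mem_of_eq_of_mem he (hE2mem _ hD1)
  have hblkeq : ∀ e B, B ∈ D → e ∈ B.edgeSet → cov e → blk e = B := by
    intro e B hB heB hc
    exact huniq _ (hblk0 e hc).1 _ hB e (hmemblk e hc) heB
  set pr0 : Sym2 ℕ → Sym2 ℕ :=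
    fun e => if e = E1 (blk e) then E2 (blk e) else E1 (blk e) with hpr0
  set c0 : Sym2 ℕ → ℕ := fun e => (tB (blk e)).2.1 with hc0
  have hcovE1 : ∀ B, B ∈ D → cov (E1 B) := fun B hB => ⟨B, hB, Or.inl rfl⟩
  have hcovE2 : ∀ B, B ∈ D → cov (E2 B) := fun B hB => ⟨B, hB, Or.inr rfl⟩
  have hblkE1 : ∀ B, B ∈ D → blk (E1 B) = B :=
    fun B hB => hblkeq _ B hB (hE1mem B hB) (hcovE1 B hB)
  have hblkE2 : ∀ B, B ∈ D → blk (E2 B) = B :=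
    fun B hB => hblkeq _ B hB (hE2mem B hB) (hcovE2 B hB)
  have hpr0E1 : ∀ B, B ∈ D → pr0 (E1 B) = E2 B := by
    intro B hB
    rw [hpr0]; dsimp only; rw [hblkE1 B hB, if_pos rfl]
  have hpr0E2 : ∀ B, B ∈ D → pr0 (E2 B) = E1 B := by
    intro B hB
    rw [hpr0]; dsimp only; rw [hblkE2 B hB, if_neg (fun h => hE12 B hB h.symm)]
  have hc0mem : ∀ B, B ∈ D → (tB B).2.1 ∈ E1 B ∧ (tB B).2.1 ∈ E2 B := by
    intro B hB
    rw [hE1, hE2]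
    exact ⟨Sym2.mem_mk_right _ _, Sym2.mem_mk_left _ _⟩
  -- hypotheses of the key lemma
  have h1 : ∀ e, cov e → e ∈ EF n ∧ cov (pr0 e) ∧ pr0 e ≠ e ∧ pr0 (pr0 e) = e ∧
      c0 e ∈ e ∧ c0 e ∈ pr0 e ∧ v ∉ e := by
    intro e hc
    obtain ⟨hBD, hcase⟩ := hblk0 e hc
    set B := blk e with hBdef
    have heB : e ∈ B.edgeSet := hmemblk e hc
    have heEF := (hBE B hBD e heB).1
    have hvnot := (hBE B hBD e heB).2
    have hprval : (e = E1 B ∧ pr0 e = E2 B) ∨ (e = E2 B ∧ pr0 e = E1 B) := by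
      rcases hcase with he | he
      · exact Or.inl ⟨he, by rw [he]; exact hpr0E1 B hBD⟩
      · rcases eq_or_ne e (E1 B) with he1 | he1
        · exact Or.inl ⟨he1, by rw [he1]; exact hpr0E1 B hBD⟩
        · exact Or.inr ⟨he, by rw [he]; exact hpr0E2 B hBD⟩
    have hc0val : c0 e = (tB B).2.1 := by rw [hc0]
    rcases hprval with ⟨he, hpr⟩ | ⟨he, hpr⟩
    · refine ⟨heEF, ?_, ?_, ?_, ?_, ?_, hvnot⟩
      · rw [hpr]; exact hcovE2 B hBD
      · rw [hpr, he]; exact fun h => hE12 B hBD h.symm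
      · rw [hpr, hpr0E2 B hBD, he]
      · rw [hc0val, he]; exact (hc0mem B hBD).1
      · rw [hc0val, hpr]; exact (hc0mem B hBD).2
    · refine ⟨heEF, ?_, ?_, ?_, ?_, ?_, hvnot⟩
      · rw [hpr]; exact hcovE1 B hBD
      · rw [hpr, he]; exact hE12 B hBD
      · rw [hpr, hpr0E1 B hBD, he]
      · rw [hc0val, he]; exact (hc0mem B hBD).2
      · rw [hc0val, hpr]; exact (hc0mem B hBD).1
  obtain ⟨Pr, ctr, hPrcov, hPr⟩ := key n v hun hn4 cov pr0 c0 h1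
  -- the new design
  set D' : Set (SimpleGraph ℕ) :=
    {G | ∃ e, e ∈ EF n ∧ G = SimpleGraph.fromEdgeSet {e, Pr e}} with hD'
  have hKonEF : ∀ e, e ∈ (Kon (Set.Iio n)).edgeSet ↔ e ∈ EF n := by
    intro e
    rw [edgeSet_Kon n, Finset.mem_coe]
  have hadjEF : ∀ x y : ℕ, s(x,y) ∈ EF n → (Kon (Set.Iio n)).Adj x y := by
    intro x y h
    rw [← SimpleGraph.mem_edgeSet, hKonEF]
    exact h
  refine ⟨w, hw3, D', ⟨?_, ?_⟩, fun B => SimpleGraph.fromEdgeSet {E1 B, E2 B}, ?_⟩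
  · -- blocks of D' are good
    rintro G ⟨e, heEF, rfl⟩
    obtain ⟨hPrEF, hPrne, hPrPr, hctr1, hctr2⟩ := hPr e heEF
    refine ⟨?_, ?_, ?_⟩
    · intro x y hxy
      rw [SimpleGraph.fromEdgeSet_adj] at hxy
      obtain ⟨hm, hxy'⟩ := hxy
      rw [Set.mem_insert_iff, Set.mem_singleton_iff] at hm
      rcases hm with hm | hm
      · exact hadjEF x y (hm ▸ heEF)
      · exact hadjEF x y (hm ▸ hPrEF)
    · obtain ⟨a, hea⟩ := Sym2.mem_iff_exists.1 hctr1
      obtain ⟨b, heb⟩ := Sym2.mem_iff_exists.1 hctr2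
      have hca : ctr e ≠ a := by
        intro h
        exact EF_not_isDiag heEF (by rw [hea, ← h]; exact Sym2.mk_isDiag_iff.2 rfl)
      have hcb : ctr e ≠ b := by
        intro h
        exact EF_not_isDiag hPrEF (by rw [heb, ← h]; exact Sym2.mk_isDiag_iff.2 rfl)
      have hab : a ≠ b := by
        rintro rfl
        exact hPrne (heb.trans hea.symm)
      have hpair : ({e, Pr e} : Set (Sym2 ℕ)) = {s(ctr e, a), s(ctr e, b)} := by
        rw [← hea, ← heb]
      rw [hpair]
      exact isCopy_aux (ctr e) a b hca hcb hab
    · refine ⟨e, ?_⟩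
      rw [SimpleGraph.edgeSet_fromEdgeSet]
      exact ⟨Set.mem_insert _ _, EF_not_isDiag heEF⟩
  · -- partition property
    intro e0 he0
    rw [hKonEF] at he0
    obtain ⟨hPrEF, hPrne, hPrPr, hctr1, hctr2⟩ := hPr e0 he0
    refine ⟨SimpleGraph.fromEdgeSet {e0, Pr e0}, ⟨⟨e0, he0, rfl⟩, ?_⟩, ?_⟩
    · rw [SimpleGraph.edgeSet_fromEdgeSet]
      exact ⟨Set.mem_insert _ _, EF_not_isDiag he0⟩
    · rintro G' ⟨⟨e, heEF, rfl⟩, hmem⟩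
      rw [SimpleGraph.edgeSet_fromEdgeSet] at hmem
      obtain ⟨hm, _⟩ := hmem
      rw [Set.mem_insert_iff, Set.mem_singleton_iff] at hm
      rcases hm with rfl | rfl
      · rfl
      · obtain ⟨_, _, hPP, _, _⟩ := hPr e heEF
        congr 1
        rw [hPP]
        exact Set.pair_comm e (Pr e)
  · -- downlink
    intro B hB
    constructor
    · refine ⟨E1 B, (hBE B hB _ (hE1mem B hB)).1, ?_⟩
      rw [(hPrcov _ (hcovE1 B hB)).1, hpr0E1 B hB]
    · intro x y hxy
      rw [SimpleGraph.fromEdgeSet_adj] at hxy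
      obtain ⟨hm, hxy'⟩ := hxy
      rw [Set.mem_insert_iff, Set.mem_singleton_iff] at hm
      rcases hm with hm | hm
      · rw [hE1] at hm
        rw [Sym2.eq_iff] at hm
        rcases hm with ⟨rfl, rfl⟩ | ⟨rfl, rfl⟩
        · exact htB1 B hB
        · exact (htB1 B hB).symm
      · rw [hE2] at hm
        rw [Sym2.eq_iff] at hm
        rcases hm with ⟨rfl, rfl⟩ | ⟨rfl, rfl⟩
        · exact htB2 B hB
        · exact (htB2 B hB).symm
end

section
/- Let Γ be a graph with at least 5 vertices and at least 3 vertices of degree ≥ 4, and let v ≡ 1 or 2 (mod 4). Then every (K_v,Γ)-design can be down-linked to a (K_{v-1},P₃)-design. -/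
open SimpleGraph

noncomputable section DLink

/-- path a - u - b as a graph on ℕ -/
def mkP (a u b : ℕ) : SimpleGraph ℕ := fromEdgeSet {s(u,a), s(u,b)}

lemma mkP_adj {a u b x y : ℕ} :
    (mkP a u b).Adj x y ↔ (s(x,y) = s(u,a) ∨ s(x,y) = s(u,b)) ∧ x ≠ y := by
  simp [mkP, fromEdgeSet_adj]

lemma mkP_edgeSet {a u b : ℕ} (ha : a ≠ u) (hb : b ≠ u) :
    (mkP a u b).edgeSet = {s(u,a), s(u,b)} := by
  ext e
  induction e using Sym2.ind with
  | _ x y =>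
    rw [mem_edgeSet, mkP_adj]
    constructor
    · rintro ⟨h, -⟩; simpa using h
    · intro h
      simp only [Set.mem_insert_iff, Set.mem_singleton_iff] at h
      refine ⟨h, ?_⟩
      rcases h with h | h <;> rw [Sym2.eq_iff] at h <;>
        rcases h with ⟨rfl, rfl⟩ | ⟨rfl, rfl⟩ <;> first | exact fun h => ha h.symm | exact fun h => hb h.symm | exact ha | exact hb
      
lemma isCopy_mkP {a u b : ℕ} (ha : a ≠ u) (hb : b ≠ u) (hab : a ≠ b) :
    IsCopy (pathGraph 3) (mkP a u b) := by
  classical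
  refine ⟨⟨fun i => if i = 0 then a else if i = 1 then u else b, ?_⟩, ?_⟩
  · intro i j hij
    fin_cases i <;> fin_cases j <;> simp_all <;> omega
  · intro x y
    rw [mkP_adj]
    constructor
    · rintro ⟨h | h, hxy⟩ <;> rw [Sym2.eq_iff] at h <;>
        rcases h with ⟨rfl, rfl⟩ | ⟨rfl, rfl⟩
      · exact ⟨1, 0, by simp [pathGraph_adj], rfl, rfl⟩
      · exact ⟨0, 1, by simp [pathGraph_adj], rfl, rfl⟩
      · exact ⟨1, 2, by simp [pathGraph_adj], rfl, rfl⟩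
      · exact ⟨2, 1, by simp [pathGraph_adj], rfl, rfl⟩
    · rintro ⟨i, j, hij, rfl, rfl⟩
      rw [pathGraph_adj] at hij
      change (mkP a u b).Adj (if i = 0 then a else if i = 1 then u else b) (if j = 0 then a else if j = 1 then u else b)
      rw [mkP_adj]
      fin_cases i <;> fin_cases j <;> simp_all [Sym2.eq_iff] <;> omega

end DLink

section DLink2
open Finset
/-- decomposition of a finite edge set into copies of P₃ -/
def Decomp (S : Finset (Sym2 ℕ)) (D : Set (SimpleGraph ℕ)) : Prop :=
  (∀ G ∈ D, IsCopy (pathGraph 3) G ∧ G.edgeSet ⊆ (S : Set (Sym2 ℕ)) ∧ G.edgeSet.Nonempty) ∧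
  ∀ e ∈ S, ∃! G, G ∈ D ∧ e ∈ G.edgeSet

lemma decomp_empty : Decomp ∅ ∅ := by
  constructor
  · rintro G ⟨⟩
  · rintro e ⟨⟩

lemma decomp_union {S₁ S₂ : Finset (Sym2 ℕ)} {D₁ D₂ : Set (SimpleGraph ℕ)}
    (h₁ : Decomp S₁ D₁) (h₂ : Decomp S₂ D₂) (hd : Disjoint S₁ S₂) :
    Decomp (S₁ ∪ S₂) (D₁ ∪ D₂) := by
  have hd' : ∀ e, e ∈ S₁ → e ∈ S₂ → False := fun e he1 he2 =>
    Finset.disjoint_left.mp hd he1 he2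
  constructor
  · rintro G (hG | hG)
    · obtain ⟨h1, h2, h3⟩ := h₁.1 G hG
      exact ⟨h1, h2.trans (by simp [Finset.coe_union]), h3⟩
    · obtain ⟨h1, h2, h3⟩ := h₂.1 G hG
      exact ⟨h1, h2.trans (by simp [Finset.coe_union]), h3⟩
  · intro e he
    rcases Finset.mem_union.mp he with he | he
    · obtain ⟨G, ⟨hG, heG⟩, huniq⟩ := h₁.2 e he
      refine ⟨G, ⟨Or.inl hG, heG⟩, ?_⟩
      rintro G' ⟨hG' | hG', heG'⟩
      · exact huniq G' ⟨hG', heG'⟩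
      · exact absurd ((h₂.1 G' hG').2.1 heG') (fun h => hd' e he h)
    · obtain ⟨G, ⟨hG, heG⟩, huniq⟩ := h₂.2 e he
      refine ⟨G, ⟨Or.inr hG, heG⟩, ?_⟩
      rintro G' ⟨hG' | hG', heG'⟩
      · exact absurd ((h₁.1 G' hG').2.1 heG') (fun h => hd' e h he)
      · exact huniq G' ⟨hG', heG'⟩

lemma decomp_pair {a u b : ℕ} (ha : a ≠ u) (hb : b ≠ u) (hab : a ≠ b) :
    Decomp {s(u,a), s(u,b)} {mkP a u b} := by
  have hes := mkP_edgeSet ha hb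
  constructor
  · rintro G rfl
    refine ⟨isCopy_mkP ha hb hab, ?_, ?_⟩
    · rw [hes]; intro e he; simpa using he
    · rw [hes]; exact ⟨s(u,a), by simp⟩
  · intro e he
    refine ⟨mkP a u b, ⟨rfl, ?_⟩, ?_⟩
    · rw [hes]; simpa using he
    · rintro G ⟨rfl, -⟩; rfl

end DLink2

section DLink3
open Finset

/-- edge set of K_m as a finset -/
def Etot (m : ℕ) : Finset (Sym2 ℕ) :=
  ((Finset.range m).sym2).filter (fun e => ¬ e.IsDiag)

lemma mem_Etot {m x y : ℕ} : s(x,y) ∈ Etot m ↔ x < m ∧ y < m ∧ x ≠ y := by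
  simp [Etot, Finset.mk_mem_sym2_iff, Sym2.mk_isDiag_iff, and_assoc]

lemma Etot_succ (m : ℕ) :
    Etot (m+1) = Etot m ∪ (Finset.range m).image (fun x => s(x, m)) := by
  ext e
  induction e using Sym2.ind with
  | _ x y =>
    simp only [mem_Etot, Finset.mem_union, Finset.mem_image, Finset.mem_range]
    constructor
    · rintro ⟨hx, hy, hxy⟩
      rcases Nat.lt_succ_iff_lt_or_eq.mp hx with hx | rfl
      · rcases Nat.lt_succ_iff_lt_or_eq.mp hy with hy | rfl
        · exact Or.inl ⟨hx, hy, hxy⟩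
        · exact Or.inr ⟨x, hx, rfl⟩
      · rcases Nat.lt_succ_iff_lt_or_eq.mp hy with hy | rfl
        · exact Or.inr ⟨y, hy, by rw [Sym2.eq_swap]⟩
        · exact absurd rfl hxy
    · rintro (⟨hx, hy, hxy⟩ | ⟨z, hz, he⟩)
      · exact ⟨hx.trans (Nat.lt_succ_self m), hy.trans (Nat.lt_succ_self m), hxy⟩
      · rw [Sym2.eq_iff] at he
        rcases he with ⟨rfl, rfl⟩ | ⟨rfl, rfl⟩ <;>
          exact ⟨by omega, by omega, by omega⟩

lemma Etot_card (m : ℕ) : 2 * (Etot m).card = m * (m - 1) := by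
  induction m with
  | zero => rfl
  | succ m ih =>
    rw [Etot_succ]
    have hdisj : Disjoint (Etot m) ((Finset.range m).image (fun x => s(x, m))) := by
      rw [Finset.disjoint_right]
      rintro e he hee
      obtain ⟨z, hz, rfl⟩ := Finset.mem_image.mp he
      rw [mem_Etot] at hee
      omega
    have hinj : Set.InjOn (fun x => s(x, m)) (Finset.range m) := by
      intro x hx z hz hxz
      simp only [Sym2.eq_iff] at hxz
      simp only [Finset.coe_range, Set.mem_Iio] at hx hz
      omega
    rw [Finset.card_union_of_disjoint hdisj, Finset.card_image_of_injOn hinj,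
      Finset.card_range]
    cases m with
    | zero => norm_num [show Etot 0 = ∅ from rfl]
    | succ k => rw [Nat.succ_sub_one] at ih ⊢; ring_nf; ring_nf at ih; omega

lemma Etot_even {v : ℕ} (hv : v % 4 = 1 ∨ v % 4 = 2) : Even (Etot (v-1)).card := by
  set m := v - 1 with hm
  have h4 : 4 ∣ m * (m - 1) := by
    rcases hv with hv | hv
    · exact Dvd.dvd.mul_right (by omega) _
    · exact Dvd.dvd.mul_left (by omega) _
  have h2 := Etot_card m
  set t := m * (m - 1)
  rw [Nat.even_iff]
  omega

end DLink3

section DLink4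
open Finset

def starE (W : Finset ℕ) : Finset (Sym2 ℕ) := W.image (fun u => s(0,u))

lemma mem_star {W : Finset ℕ} {x y : ℕ} :
    s(x,y) ∈ starE W ↔ (x = 0 ∧ y ∈ W) ∨ (y = 0 ∧ x ∈ W) := by
  simp only [starE, Finset.mem_image, Sym2.eq_iff]
  constructor
  · rintro ⟨u, hu, (⟨h1, rfl⟩ | ⟨h1, rfl⟩)⟩
    · exact Or.inl ⟨h1.symm, hu⟩
    · exact Or.inr ⟨h1.symm, hu⟩
  · rintro (⟨rfl, hy⟩ | ⟨rfl, hx⟩)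
    · exact ⟨y, hy, Or.inl ⟨rfl, rfl⟩⟩
    · exact ⟨x, hx, Or.inr ⟨rfl, rfl⟩⟩

lemma not_mem_star {W : Finset ℕ} (h0 : 0 ∉ W) {x y : ℕ}
    (hx : x ∈ W) (hy : y ∈ W) : s(x,y) ∉ starE W := by
  rw [mem_star]
  rintro (⟨rfl, -⟩ | ⟨rfl, -⟩) <;> exact h0 (by assumption)

lemma pairing : ∀ n (H : Finset (Sym2 ℕ)) (W : Finset ℕ), H.card + W.card ≤ n → 0 ∉ W →
    (∀ e ∈ H, ∃ a b, a ∈ W ∧ b ∈ W ∧ a ≠ b ∧ e = s(a,b)) →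
    Even (H.card + W.card) →
    ∃ Dp, Decomp (H ∪ starE W) Dp := by
  intro n
  induction n using Nat.strong_induction_on with
  | _ n IH =>
  intro H W hn h0 hH hpar
  classical
  rcases H.eq_empty_or_nonempty with rfl | ⟨e, he⟩
  · -- H empty : pair up starE edges
    rcases W.eq_empty_or_nonempty with rfl | ⟨u, hu⟩
    · exact ⟨∅, by simpa [starE] using decomp_empty⟩
    · have hW2 : 2 ≤ W.card := by
        have h1 : W.card ≠ 0 := Finset.card_ne_zero_of_mem hu
        rcases hpar with ⟨k, hk⟩
        simp only [Finset.card_empty, Nat.zero_add] at hk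
        omega
      have hWu : (W.erase u).Nonempty := by
        rw [← Finset.card_pos, Finset.card_erase_of_mem hu]; omega
      obtain ⟨u', hu'⟩ := hWu
      have hu'W : u' ∈ W := Finset.mem_of_mem_erase hu'
      have huu' : u' ≠ u := Finset.ne_of_mem_erase hu'
      have hu0 : u ≠ 0 := fun h => h0 (h ▸ hu)
      have hu'0 : u' ≠ 0 := fun h => h0 (h ▸ hu'W)
      set W'' := (W.erase u).erase u' with hW''
      have h0'' : 0 ∉ W'' := fun h => h0 (Finset.mem_of_mem_erase (Finset.mem_of_mem_erase h))
      have hcard'' : W''.card = W.card - 2 := by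
        rw [hW'', Finset.card_erase_of_mem hu', Finset.card_erase_of_mem hu]; omega
      obtain ⟨Dp, hDp⟩ := IH (n-1) (by omega) ∅ W'' (by simp; omega) h0''
        (by rintro e ⟨⟩) (by simpa [hcard''] using (by rcases hpar with ⟨k,hk⟩; simp at hk; exact ⟨k-1, by omega⟩ : Even (W.card - 2)))
      refine ⟨{mkP u 0 u'} ∪ Dp, ?_⟩
      have hsplit : (∅ : Finset (Sym2 ℕ)) ∪ starE W = ({s(0,u), s(0,u')} : Finset (Sym2 ℕ)) ∪ (∅ ∪ starE W'') := by
        ext f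
        induction f using Sym2.ind with
        | _ x y =>
          simp only [Finset.empty_union, Finset.mem_union, mem_star, Finset.mem_insert,
            Finset.mem_singleton, hW'', Finset.mem_erase, Sym2.eq_iff]
          constructor
          · rintro (⟨rfl, hy⟩ | ⟨rfl, hx⟩)
            · by_cases h1 : y = u
              · subst h1; exact Or.inl (Or.inl (Or.inl ⟨rfl, rfl⟩))
              · by_cases h2 : y = u'
                · subst h2; exact Or.inl (Or.inr (Or.inl ⟨rfl, rfl⟩))
                · exact Or.inr (Or.inl ⟨rfl, h2, h1, hy⟩)
            · by_cases h1 : x = u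
              · subst h1; exact Or.inl (Or.inl (Or.inr ⟨rfl, rfl⟩))
              · by_cases h2 : x = u'
                · subst h2; exact Or.inl (Or.inr (Or.inr ⟨rfl, rfl⟩))
                · exact Or.inr (Or.inr ⟨rfl, h2, h1, hx⟩)
          · rintro ((h | h) | (h | h))
            · rcases h with ⟨rfl,rfl⟩|⟨rfl,rfl⟩
              · exact Or.inl ⟨rfl, hu⟩
              · exact Or.inr ⟨rfl, hu⟩
            · rcases h with ⟨rfl,rfl⟩|⟨rfl,rfl⟩
              · exact Or.inl ⟨rfl, hu'W⟩
              · exact Or.inr ⟨rfl, hu'W⟩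
            · exact Or.inl ⟨h.1, h.2.2.2⟩
            · exact Or.inr ⟨h.1, h.2.2.2⟩
      rw [hsplit]
      refine decomp_union ?_ hDp ?_
      · have := decomp_pair (a := u) (u := 0) (b := u') hu0 hu'0 (fun h => huu' h.symm)
        simpa using this
      · rw [Finset.disjoint_left]
        rintro f hf hf2
        simp only [Finset.mem_insert, Finset.mem_singleton] at hf
        simp only [Finset.empty_union] at hf2
        rcases hf with rfl | rfl
        · rw [mem_star] at hf2
          rcases hf2 with ⟨h, hm⟩ | ⟨rfl, hm⟩
          · exact (Finset.notMem_erase u _ ) (Finset.mem_of_mem_erase (hW'' ▸ hm) : u ∈ W.erase u)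
          · exact hu0 rfl
        · rw [mem_star] at hf2
          rcases hf2 with ⟨h, hm⟩ | ⟨rfl, hm⟩
          · exact (Finset.notMem_erase u' _) (hW'' ▸ hm : u' ∈ (W.erase u).erase u')
          · exact hu'0 rfl
  · -- H nonempty
    obtain ⟨a, b, haW, hbW, hab, hefrm⟩ := hH e he
    have ha0 : a ≠ 0 := fun h => h0 (h ▸ haW)
    have hb0 : b ≠ 0 := fun h => h0 (h ▸ hbW)
    by_cases hsh : ∃ e' ∈ H.erase e, a ∈ e' ∨ b ∈ e'
    · -- two H-edges sharing a vertex
      obtain ⟨e', he', hmem⟩ := hsh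
      have hne : e' ≠ e := Finset.ne_of_mem_erase he'
      have he'H : e' ∈ H := Finset.mem_of_mem_erase he'
      -- common vertex u
      have hcommon : ∃ u x y : ℕ, u ≠ x ∧ u ≠ y ∧ x ≠ y ∧ e = s(u,x) ∧ e' = s(u,y) ∧
          (∀ z, z ∈ e → z ∈ W) ∧ (∀ z, z ∈ e' → z ∈ W) := by
        obtain ⟨a', b', ha'W, hb'W, hab', hefrm'⟩ := hH e' he'H
        have hu : ∃ u, u ∈ e ∧ u ∈ e' := by
          rcases hmem with h | h
          · exact ⟨a, by rw [hefrm]; simp, h⟩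
          · exact ⟨b, by rw [hefrm]; simp [Sym2.mem_iff], h⟩
        obtain ⟨u, hue, hue'⟩ := hu
        refine ⟨u, Sym2.Mem.other hue, Sym2.Mem.other hue', ?_, ?_, ?_,
          (Sym2.other_spec hue).symm, (Sym2.other_spec hue').symm, ?_, ?_⟩
        · intro h
          have : e.IsDiag := by rw [← Sym2.other_spec hue, ← h]; exact Sym2.mk_isDiag_iff.mpr rfl
          rw [hefrm] at this; exact hab (Sym2.mk_isDiag_iff.mp this)
        · intro h
          have : e'.IsDiag := by rw [← Sym2.other_spec hue', ← h]; exact Sym2.mk_isDiag_iff.mpr rfl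
          rw [hefrm'] at this; exact hab' (Sym2.mk_isDiag_iff.mp this)
        · intro h
          apply hne
          rw [← Sym2.other_spec hue', ← Sym2.other_spec hue, h]
        · intro z hz; rw [hefrm] at hz
          rcases Sym2.mem_iff.mp hz with rfl | rfl <;> assumption
        · intro z hz; rw [hefrm'] at hz
          rcases Sym2.mem_iff.mp hz with rfl | rfl <;> assumption
      obtain ⟨u, x, y, hux, huy, hxy, heq, heq', hWe, hWe'⟩ := hcommon
      set H' := (H.erase e).erase e' with hH'
      have hcardH' : H'.card = H.card - 2 := by
        rw [hH', Finset.card_erase_of_mem he', Finset.card_erase_of_mem he]; omega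
      have hcard2 : 2 ≤ H.card := by
        have := Finset.card_erase_of_mem he
        have h1 : 0 < (H.erase e).card := Finset.card_pos.mpr ⟨e', he'⟩
        omega
      obtain ⟨Dp, hDp⟩ := IH (n-1) (by omega) H' W (by omega) h0
        (fun f hf => hH f (Finset.mem_of_mem_erase (Finset.mem_of_mem_erase hf)))
        (by rcases hpar with ⟨k, hk⟩; exact ⟨k-1, by omega⟩)
      refine ⟨{mkP x u y} ∪ Dp, ?_⟩
      have hsplit : H ∪ starE W = ({s(u,x), s(u,y)} : Finset (Sym2 ℕ)) ∪ (H' ∪ starE W) := by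
        ext f
        simp only [Finset.mem_union, Finset.mem_insert, Finset.mem_singleton, hH',
          Finset.mem_erase]
        constructor
        · rintro (hf | hf)
          · by_cases h1 : f = e
            · exact Or.inl (Or.inl (h1.trans heq))
            · by_cases h2 : f = e'
              · exact Or.inl (Or.inr (h2.trans heq'))
              · exact Or.inr (Or.inl ⟨h2, h1, hf⟩)
          · exact Or.inr (Or.inr hf)
        · rintro ((rfl | rfl) | (⟨-, -, hf⟩ | hf))
          · exact Or.inl (heq ▸ he)
          · exact Or.inl (heq' ▸ he'H)
          · exact Or.inl hf
          · exact Or.inr hf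
      rw [hsplit]
      refine decomp_union ?_ hDp ?_
      · have := decomp_pair (a := x) (u := u) (b := y) (fun h => hux h.symm) (fun h => huy h.symm) hxy
        simpa using this
      · rw [Finset.disjoint_left]
        rintro f hf hf2
        simp only [Finset.mem_insert, Finset.mem_singleton] at hf
        have hfe : f = e ∨ f = e' := by
          rcases hf with rfl | rfl
          · exact Or.inl heq.symm
          · exact Or.inr heq'.symm
        rcases Finset.mem_union.mp hf2 with hf3 | hf3
        · rw [hH'] at hf3
          rcases hfe with hfe | hfe
          · rw [hfe] at hf3; exact (Finset.notMem_erase e H) (Finset.mem_of_mem_erase hf3)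
          · rw [hfe] at hf3; exact (Finset.notMem_erase e' (H.erase e)) hf3
        · rcases hfe with hfe | hfe
          · rw [hfe, heq, mem_star] at hf3
            rcases hf3 with ⟨h1, -⟩ | ⟨h1, -⟩
            · exact h0 (by rw [← h1]; exact hWe u (by rw [heq]; simp))
            · exact h0 (by rw [← h1]; exact hWe x (by rw [heq]; simp [Sym2.mem_iff]))
          · rw [hfe, heq', mem_star] at hf3
            rcases hf3 with ⟨h1, -⟩ | ⟨h1, -⟩
            · exact h0 (by rw [← h1]; exact hWe' u (by rw [heq']; simp))
            · exact h0 (by rw [← h1]; exact hWe' y (by rw [heq']; simp [Sym2.mem_iff]))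
    · -- isolated H-edge: pair with starE edge s(0,a)
      push_neg at hsh
      set H' := H.erase e with hH'
      set W' := W.erase a with hW'
      have h0' : 0 ∉ W' := fun h => h0 (Finset.mem_of_mem_erase h)
      have hH'prop : ∀ f ∈ H', ∃ a' b', a' ∈ W' ∧ b' ∈ W' ∧ a' ≠ b' ∧ f = s(a',b') := by
        intro f hf
        obtain ⟨a', b', h1, h2, h3, h4⟩ := hH f (Finset.mem_of_mem_erase hf)
        have hna : a ∉ f := (hsh f hf).1
        rw [h4, Sym2.mem_iff] at hna
        push_neg at hna
        exact ⟨a', b', Finset.mem_erase.mpr ⟨fun h => hna.1 h.symm, h1⟩,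
          Finset.mem_erase.mpr ⟨fun h => hna.2 h.symm, h2⟩, h3, h4⟩
      have hc1 : H'.card = H.card - 1 := by rw [hH']; exact Finset.card_erase_of_mem he
      have hc2 : W'.card = W.card - 1 := by rw [hW']; exact Finset.card_erase_of_mem haW
      have hc3 : 0 < H.card := Finset.card_pos.mpr ⟨e, he⟩
      have hc4 : 0 < W.card := Finset.card_pos.mpr ⟨a, haW⟩
      obtain ⟨Dp, hDp⟩ := IH (n-1) (by omega) H' W'
        (by omega)
        h0' hH'prop
        (by rcases hpar with ⟨k, hk⟩
            exact ⟨k-1, by omega⟩)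
      refine ⟨{mkP b a 0} ∪ Dp, ?_⟩
      have hsplit : H ∪ starE W = ({s(a,b), s(a,0)} : Finset (Sym2 ℕ)) ∪ (H' ∪ starE W') := by
        ext f
        induction f using Sym2.ind with
        | _ x y =>
          simp only [Finset.mem_union, Finset.mem_insert, Finset.mem_singleton, hH', hW',
            Finset.mem_erase, mem_star]
          constructor
          · rintro (hf | hf)
            · by_cases h1 : s(x,y) = e
              · exact Or.inl (Or.inl (h1.trans hefrm))
              · exact Or.inr (Or.inl ⟨h1, hf⟩)
            · rcases hf with ⟨rfl, hy⟩ | ⟨rfl, hx⟩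
              · by_cases h1 : y = a
                · subst h1; exact Or.inl (Or.inr (by rw [Sym2.eq_iff]; tauto))
                · exact Or.inr (Or.inr (Or.inl ⟨rfl, h1, hy⟩))
              · by_cases h1 : x = a
                · subst h1; exact Or.inl (Or.inr (by rw [Sym2.eq_iff]; tauto))
                · exact Or.inr (Or.inr (Or.inr ⟨rfl, h1, hx⟩))
          · rintro ((hf | hf) | (⟨-, hf⟩ | hf))
            · exact Or.inl (by rw [hf.trans hefrm.symm]; exact he)
            · rw [Sym2.eq_iff] at hf
              rcases hf with ⟨rfl, rfl⟩ | ⟨rfl, rfl⟩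
              · exact Or.inr (Or.inr ⟨rfl, haW⟩)
              · exact Or.inr (Or.inl ⟨rfl, haW⟩)
            · exact Or.inl hf
            · rcases hf with ⟨rfl, hy⟩ | ⟨rfl, hx⟩
              · exact Or.inr (Or.inl ⟨rfl, hy.2⟩)
              · exact Or.inr (Or.inr ⟨rfl, hx.2⟩)
      rw [hsplit]
      refine decomp_union ?_ hDp ?_
      · have := decomp_pair (a := b) (u := a) (b := 0) (fun h => hab h.symm) (fun h => ha0 h.symm) hb0
        simpa using this
      · rw [Finset.disjoint_left]
        rintro f hf hf2
        simp only [Finset.mem_insert, Finset.mem_singleton] at hf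
        rcases Finset.mem_union.mp hf2 with hf2 | hf2
        · obtain ⟨a', b', h1, h2, h3, h4⟩ := hH'prop f hf2
          rcases hf with hfa | hfa
          · rw [hH', hfa, ← hefrm] at hf2
            exact (Finset.notMem_erase e H) hf2
          · have h6 : s(a,0) = s(a',b') := by rw [← hfa, h4]
            rw [Sym2.eq_iff] at h6
            rcases h6 with ⟨-, h5⟩ | ⟨-, h5⟩
            · exact h0' (by rwa [← h5] at h2)
            · exact h0' (by rwa [← h5] at h1)
        · rcases hf with hfa | hfa
          · rw [hfa, mem_star] at hf2
            rcases hf2 with ⟨h1, -⟩ | ⟨h1, -⟩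
            · exact ha0 h1
            · exact hb0 h1
          · rw [hfa, mem_star] at hf2
            rcases hf2 with ⟨h1, hm⟩ | ⟨h1, hm⟩
            · exact ha0 h1
            · exact (Finset.notMem_erase a W) (hW' ▸ hm)
      
end DLink4

section DLink5
open Finset

lemma Kon_edgeSet (m : ℕ) : (Kon (Set.Iio m)).edgeSet = ↑(Etot m) := by
  ext e
  induction e using Sym2.ind with
  | _ x y =>
    rw [mem_edgeSet, Finset.mem_coe, mem_Etot]
    show (x ≠ y ∧ x ∈ Set.Iio m ∧ y ∈ Set.Iio m) ↔ _
    simp only [Set.mem_Iio]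
    tauto

theorem stmt6' {α : Type*} [Fintype α] [DecidableEq α] (Γ : SimpleGraph α)
    [DecidableRel Γ.Adj] (hcard : 5 ≤ Fintype.card α)
    (hdeg : 3 ≤ (Finset.univ.filter fun a => 4 ≤ Γ.degree a).card)
    (v : ℕ) (hv : v % 4 = 1 ∨ v % 4 = 2)
    (D : Set (SimpleGraph ℕ)) (hD : IsDesign (Kon (Set.Iio v)) Γ D) :
    ∃ D' : Set (SimpleGraph ℕ),
      IsDesign (Kon (Set.Iio (v - 1))) (pathGraph 3) D' ∧
      ∃ f, IsDownlink D D' f := by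
  classical
  obtain ⟨hblocks, hpart⟩ := hD
  have key : ∀ B, B ∈ D → ∃ cc aa bb : ℕ,
      B.Adj cc aa ∧ B.Adj cc bb ∧ aa ≠ bb ∧
      0 < cc ∧ cc < v-1 ∧ 0 < aa ∧ aa < v-1 ∧ 0 < bb ∧ bb < v-1 := by
    intro B hB
    obtain ⟨hle, ⟨φ, hφ⟩, -⟩ := hblocks B hB
    have himg : ∀ w z, Γ.Adj w z → B.Adj (φ w) (φ z) :=
      fun w z h => (hφ _ _).mpr ⟨w, z, h, rfl, rfl⟩
    obtain ⟨t, hts, htc⟩ := Finset.exists_subset_card_eq hdeg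
    have htimg : (t.image φ).card = 3 := by
      rw [Finset.card_image_of_injOn (φ.injective.injOn), htc]
    have h7 : ({0, v-1} : Finset ℕ).card ≤ 2 :=
      (Finset.card_insert_le _ _).trans (by simp)
    have h5 : ((t.image φ) \ {0, v-1}).Nonempty := by
      rw [← Finset.card_pos]
      have h6 := Finset.le_card_sdiff ({0, v-1} : Finset ℕ) (t.image φ)
      omega
    obtain ⟨cc, hcc⟩ := h5
    rw [Finset.mem_sdiff] at hcc
    obtain ⟨hcc1, hcc2⟩ := hcc
    obtain ⟨w, hw, rfl⟩ := Finset.mem_image.mp hcc1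
    have hwdeg : 4 ≤ Γ.degree w := (Finset.mem_filter.mp (hts hw)).2
    have hN : 4 ≤ ((Γ.neighborFinset w).image φ).card := by
      rw [Finset.card_image_of_injOn (φ.injective.injOn)]; exact hwdeg
    have h8 : 1 < (((Γ.neighborFinset w).image φ) \ {0, v-1}).card := by
      have h6 := Finset.le_card_sdiff ({0, v-1} : Finset ℕ) ((Γ.neighborFinset w).image φ)
      omega
    obtain ⟨aa, haa, bb, hbb, hab⟩ := Finset.one_lt_card.mp h8
    rw [Finset.mem_sdiff] at haa hbb
    obtain ⟨z1, hz1, rfl⟩ := Finset.mem_image.mp haa.1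
    obtain ⟨z2, hz2, rfl⟩ := Finset.mem_image.mp hbb.1
    have hA1 : B.Adj (φ w) (φ z1) := himg _ _ ((Γ.mem_neighborFinset w _).mp hz1)
    have hA2 : B.Adj (φ w) (φ z2) := himg _ _ ((Γ.mem_neighborFinset w _).mp hz2)
    obtain ⟨-, hcv, hav⟩ : φ w ≠ φ z1 ∧ φ w ∈ Set.Iio v ∧ φ z1 ∈ Set.Iio v := hle hA1
    obtain ⟨-, -, hbv⟩ : φ w ≠ φ z2 ∧ φ w ∈ Set.Iio v ∧ φ z2 ∈ Set.Iio v := hle hA2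
    have hcv' : φ w < v := hcv
    have hav' : φ z1 < v := hav
    have hbv' : φ z2 < v := hbv
    have hcc2' : φ w ≠ 0 ∧ φ w ≠ v-1 := by
      simpa only [Finset.mem_insert, Finset.mem_singleton, not_or] using hcc2
    have haa2 : φ z1 ≠ 0 ∧ φ z1 ≠ v-1 := by
      simpa only [Finset.mem_insert, Finset.mem_singleton, not_or] using haa.2
    have hbb2 : φ z2 ≠ 0 ∧ φ z2 ≠ v-1 := by
      simpa only [Finset.mem_insert, Finset.mem_singleton, not_or] using hbb.2
    exact ⟨φ w, φ z1, φ z2, hA1, hA2, hab,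
      by omega, by omega, by omega, by omega, by omega, by omega⟩
  choose! cB aB bB hkey using key
  have hP1 : ∀ B ∈ D, B.Adj (cB B) (aB B) := fun B hB => (hkey B hB).1
  have hP2 : ∀ B ∈ D, B.Adj (cB B) (bB B) := fun B hB => (hkey B hB).2.1
  have hP3 : ∀ B ∈ D, aB B ≠ bB B := fun B hB => (hkey B hB).2.2.1
  have hPc : ∀ B ∈ D, 0 < cB B ∧ cB B < v-1 := fun B hB =>
    ⟨(hkey B hB).2.2.2.1, (hkey B hB).2.2.2.2.1⟩
  have hPa : ∀ B ∈ D, 0 < aB B ∧ aB B < v-1 := fun B hB =>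
    ⟨(hkey B hB).2.2.2.2.2.1, (hkey B hB).2.2.2.2.2.2.1⟩
  have hPb : ∀ B ∈ D, 0 < bB B ∧ bB B < v-1 := fun B hB =>
    ⟨(hkey B hB).2.2.2.2.2.2.2.1, (hkey B hB).2.2.2.2.2.2.2.2⟩
  have hedge_unique : ∀ (e : Sym2 ℕ) (B B' : SimpleGraph ℕ), B ∈ D → B' ∈ D →
      e ∈ B.edgeSet → e ∈ B'.edgeSet → B = B' := by
    intro e B B' hB hB' he he'
    have heK : e ∈ (Kon (Set.Iio v)).edgeSet :=
      edgeSet_subset_edgeSet.mpr (hblocks B hB).1 he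
    obtain ⟨G, -, huniq⟩ := hpart e heK
    rw [huniq B ⟨hB, he⟩, huniq B' ⟨hB', he'⟩]
  have hDfin : D.Finite := by
    apply Set.Finite.of_finite_image (f := fun B => s(cB B, aB B))
    · apply Set.Finite.subset (Etot v).finite_toSet
      rintro e ⟨B, hB, rfl⟩
      obtain ⟨hne, hx, hy⟩ : cB B ≠ aB B ∧ cB B ∈ Set.Iio v ∧ aB B ∈ Set.Iio v := (hblocks B hB).1 (hP1 B hB)
      exact Finset.mem_coe.mpr (mem_Etot.mpr ⟨hx, hy, hne⟩)
    · intro B hB B' hB' hEq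
      refine hedge_unique _ B B' hB hB' (B.mem_edgeSet.mpr (hP1 B hB)) ?_
      have hEq' : s(cB B, aB B) = s(cB B', aB B') := hEq
      rw [hEq']; exact B'.mem_edgeSet.mpr (hP1 B' hB')
  set DF := hDfin.toFinset with hDF
  have hmemDF : ∀ B, B ∈ DF ↔ B ∈ D := fun B => hDfin.mem_toFinset
  set CH := DF.biUnion (fun B => {s(cB B, aB B), s(cB B, bB B)}) with hCH
  have hPinB : ∀ B ∈ D, s(cB B, aB B) ∈ B.edgeSet ∧ s(cB B, bB B) ∈ B.edgeSet :=
    fun B hB => ⟨B.mem_edgeSet.mpr (hP1 B hB), B.mem_edgeSet.mpr (hP2 B hB)⟩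
  have hpair_ne : ∀ B ∈ D, s(cB B, aB B) ≠ s(cB B, bB B) := by
    intro B hB h
    rw [Sym2.eq_iff] at h
    rcases h with ⟨-, h⟩ | ⟨-, h⟩
    · exact hP3 B hB h
    · exact (hP1 B hB).ne' h
  have hCHsub : ∀ e ∈ CH, ∃ B, B ∈ D ∧ (e = s(cB B, aB B) ∨ e = s(cB B, bB B)) := by
    intro e he
    obtain ⟨B, hB, hmem⟩ := Finset.mem_biUnion.mp he
    refine ⟨B, (hmemDF B).mp hB, ?_⟩
    simpa using hmem
  have hCHinB : ∀ e ∈ CH, ∃ B, B ∈ D ∧ e ∈ B.edgeSet := by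
    intro e he
    obtain ⟨B, hB, h | h⟩ := hCHsub e he
    · exact ⟨B, hB, h ▸ (hPinB B hB).1⟩
    · exact ⟨B, hB, h ▸ (hPinB B hB).2⟩
  have hCHEtot : CH ⊆ Etot (v-1) := by
    intro e he
    obtain ⟨B, hB, h | h⟩ := hCHsub e he <;> subst h <;>
      exact mem_Etot.mpr ⟨(hPc B hB).2, by first | exact (hPa B hB).2 | exact (hPb B hB).2,
        by first | exact (hP1 B hB).ne | exact (hP2 B hB).ne⟩
  have hevenCH : Even CH.card := by
    rw [hCH, Finset.card_biUnion]
    · rw [Finset.sum_const_nat (m := 2) (fun B hB => by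
        rw [Finset.card_insert_of_notMem (by simpa using hpair_ne B ((hmemDF B).mp hB)),
          Finset.card_singleton])]
      exact ⟨DF.card, by ring⟩
    · intro B hB B' hB' hne
      rw [Function.onFun, Finset.disjoint_left]
      intro e he he'
      apply hne
      have h1 : e ∈ B.edgeSet := by
        rcases Finset.mem_insert.mp he with rfl | h
        · exact (hPinB B ((hmemDF B).mp hB)).1
        · rw [Finset.mem_singleton.mp h]; exact (hPinB B ((hmemDF B).mp hB)).2
      have h2 : e ∈ B'.edgeSet := by
        rcases Finset.mem_insert.mp he' with rfl | h
        · exact (hPinB B' ((hmemDF B').mp hB')).1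
        · rw [Finset.mem_singleton.mp h]; exact (hPinB B' ((hmemDF B').mp hB')).2
      exact hedge_unique e B B' ((hmemDF B).mp hB) ((hmemDF B').mp hB') h1 h2
  set W0 := Finset.Ioo 0 (v-1) with hW0
  have h0W0 : 0 ∉ W0 := by rw [hW0]; simp
  have hstarsub : starE W0 ⊆ Etot (v-1) := by
    intro e he
    obtain ⟨u, hu, rfl⟩ := Finset.mem_image.mp he
    rw [hW0, Finset.mem_Ioo] at hu
    exact mem_Etot.mpr ⟨by omega, hu.2, by omega⟩
  have hdisjCHstar : Disjoint CH (starE W0) := by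
    rw [Finset.disjoint_left]
    intro e he he'
    obtain ⟨B, hB, h | h⟩ := hCHsub e he <;> subst h <;> rw [mem_star] at he'
    · rcases he' with ⟨h1, -⟩ | ⟨h1, -⟩
      · exact absurd h1 (by have := (hPc B hB).1; omega)
      · exact absurd h1 (by have := (hPa B hB).1; omega)
    · rcases he' with ⟨h1, -⟩ | ⟨h1, -⟩
      · exact absurd h1 (by have := (hPc B hB).1; omega)
      · exact absurd h1 (by have := (hPb B hB).1; omega)
  set H0 := Etot (v-1) \ (CH ∪ starE W0) with hH0def
  have hsubU : CH ∪ starE W0 ⊆ Etot (v-1) := Finset.union_subset hCHEtot hstarsub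
  have hsplitAll : (CH ∪ starE W0) ∪ H0 = Etot (v-1) := Finset.union_sdiff_of_subset hsubU
  have hstarcard : (starE W0).card = W0.card := by
    apply Finset.card_image_of_injOn
    intro u hu u' hu' h
    rw [Sym2.eq_iff] at h
    rcases h with ⟨-, h⟩ | ⟨h1, h2⟩
    · exact h
    · rw [hW0] at hu hu'
      simp only [Finset.coe_Ioo, Set.mem_Ioo] at hu hu'
      omega
  have hcardsplit : CH.card + (starE W0).card + H0.card = (Etot (v-1)).card := by
    rw [← hsplitAll, Finset.card_union_of_disjoint Finset.disjoint_sdiff,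
      Finset.card_union_of_disjoint hdisjCHstar]
  have hparH : Even (H0.card + W0.card) := by
    have h1 := Etot_even hv
    rcases h1 with ⟨k1, hk1⟩
    rcases hevenCH with ⟨k2, hk2⟩
    refine ⟨k1 - k2, ?_⟩
    omega
  have hH0 : ∀ e ∈ H0, ∃ x y, x ∈ W0 ∧ y ∈ W0 ∧ x ≠ y ∧ e = s(x,y) := by
    intro e he
    rw [hH0def, Finset.mem_sdiff, Finset.mem_union, not_or] at he
    obtain ⟨he1, -, he3⟩ := he
    revert he1 he3
    induction e using Sym2.ind with
    | _ x y =>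
      intro he1 he3
      rw [mem_Etot] at he1
      rw [mem_star] at he3
      have hx : 0 < x := by
        rcases Nat.eq_zero_or_pos x with rfl | h
        · exact absurd (Or.inl ⟨rfl, by rw [hW0, Finset.mem_Ioo]; omega⟩) he3
        · exact h
      have hy : 0 < y := by
        rcases Nat.eq_zero_or_pos y with rfl | h
        · exact absurd (Or.inr ⟨rfl, by rw [hW0, Finset.mem_Ioo]; omega⟩) he3
        · exact h
      exact ⟨x, y, by rw [hW0, Finset.mem_Ioo]; omega,
        by rw [hW0, Finset.mem_Ioo]; omega, he1.2.2, rfl⟩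
  obtain ⟨Dp, hDp⟩ := pairing (H0.card + W0.card) H0 W0 le_rfl h0W0 hH0 hparH
  set PP : SimpleGraph ℕ → SimpleGraph ℕ := fun B => mkP (aB B) (cB B) (bB B) with hPP
  have hPedgeSet : ∀ B ∈ D, (PP B).edgeSet = {s(cB B, aB B), s(cB B, bB B)} :=
    fun B hB => mkP_edgeSet (hP1 B hB).ne' (hP2 B hB).ne'
  have hdecompCH : Decomp CH (PP '' D) := by
    constructor
    · rintro G ⟨B, hB, rfl⟩
      refine ⟨isCopy_mkP (hP1 B hB).ne' (hP2 B hB).ne' (hP3 B hB), ?_, ?_⟩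
      · rw [hPedgeSet B hB]
        intro e he
        rcases Set.mem_insert_iff.mp he with rfl | he
        · exact Finset.mem_coe.mpr (Finset.mem_biUnion.mpr
            ⟨B, (hmemDF B).mpr hB, by simp⟩)
        · rw [Set.mem_singleton_iff.mp he]
          exact Finset.mem_coe.mpr (Finset.mem_biUnion.mpr
            ⟨B, (hmemDF B).mpr hB, by simp⟩)
      · rw [hPedgeSet B hB]
        exact ⟨s(cB B, aB B), by simp⟩
    · intro e he
      obtain ⟨B, hB, hor⟩ := hCHsub e he
      have heB : e ∈ B.edgeSet := by
        rcases hor with rfl | rfl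
        · exact (hPinB B hB).1
        · exact (hPinB B hB).2
      refine ⟨PP B, ⟨⟨B, hB, rfl⟩, ?_⟩, ?_⟩
      · rw [hPedgeSet B hB]
        rcases hor with rfl | rfl <;> simp
      · rintro G ⟨⟨B', hB', rfl⟩, heG⟩
        rw [hPedgeSet B' hB'] at heG
        have heB' : e ∈ B'.edgeSet := by
          rcases Set.mem_insert_iff.mp heG with rfl | heG
          · exact (hPinB B' hB').1
          · rw [Set.mem_singleton_iff.mp heG]; exact (hPinB B' hB').2
        rw [hedge_unique e B' B hB' hB heB' heB]
  have hdisj2 : Disjoint CH (H0 ∪ starE W0) := by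
    rw [Finset.disjoint_left]
    intro e he he'
    rcases Finset.mem_union.mp he' with h | h
    · rw [hH0def, Finset.mem_sdiff] at h
      exact h.2 (Finset.mem_union_left _ he)
    · exact Finset.disjoint_left.mp hdisjCHstar he h
  have hUnionAll : CH ∪ (H0 ∪ starE W0) = Etot (v-1) := by
    rw [← hsplitAll]
    ext e
    simp only [Finset.mem_union]
    tauto
  have hdecompAll : Decomp (Etot (v-1)) (PP '' D ∪ Dp) := by
    rw [← hUnionAll]
    exact decomp_union hdecompCH hDp hdisj2
  refine ⟨PP '' D ∪ Dp, ⟨?_, ?_⟩, PP, ?_⟩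
  · intro G hG
    obtain ⟨h1, h2, h3⟩ := hdecompAll.1 G hG
    refine ⟨?_, h1, h3⟩
    rw [← Kon_edgeSet] at h2
    exact edgeSet_subset_edgeSet.mp h2
  · intro e he
    rw [Kon_edgeSet] at he
    exact hdecompAll.2 e (Finset.mem_coe.mp he)
  · intro B hB
    refine ⟨Or.inl ⟨B, hB, rfl⟩, ?_⟩
    intro x y hxy
    rw [hPP] at hxy
    rw [mkP_adj] at hxy
    obtain ⟨h, -⟩ := hxy
    rcases h with h | h <;> rw [Sym2.eq_iff] at h <;>
      rcases h with ⟨rfl, rfl⟩ | ⟨rfl, rfl⟩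
    · exact hP1 B hB
    · exact (hP1 B hB).symm
    · exact hP2 B hB
    · exact (hP2 B hB).symm

end DLink5

/-- If `Γ` has at least 5 vertices and at least 3 vertices of degree ≥ 4 and
`v ≡ 1, 2 (mod 4)`, then every `(K_v,Γ)`-design can be down-linked to a
`(K_{v-1},P₃)`-design. -/
theorem stmt6 {α : Type*} [Fintype α] [DecidableEq α] (Γ : SimpleGraph α)
    [DecidableRel Γ.Adj] (hcard : 5 ≤ Fintype.card α)
    (hdeg : 3 ≤ (Finset.univ.filter fun a => 4 ≤ Γ.degree a).card)
    (v : ℕ) (hv : v % 4 = 1 ∨ v % 4 = 2)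
    (D : Set (SimpleGraph ℕ)) (hD : IsDesign (Kon (Set.Iio v)) Γ D) :
    ∃ D' : Set (SimpleGraph ℕ),
      IsDesign (Kon (Set.Iio (v - 1))) (pathGraph 3) D' ∧
      ∃ f, IsDownlink D D' f := by
  exact stmt6' Γ hcard hdeg v hv D hD
end
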